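/- arXiv:1207.5077 — 5 statements merged into one kernel-verified Lean document; each statement's English description precedes it below -/
import Mathlib

section
/- Let ν be a finite Borel measure on ℝ, let J ≥ 1 be an integer, let α > 0, and let D < ∞ be such that ∫_ℝ |η − ψ|^{−Jα} dν(η) ≤ D for every ψ ∈ ℝ. Then for all real numbers φ_1,…,φ_J, ∫_ℝ |h_J(η; φ_1,…,φ_J)|^α dν(η) ≤ C_J · D, where C_J = (1/(J+1))·binom(2J, J) is the J-th Catalan number. (The finitely many points η at which some denominator in the recursive definition of h_J vanishes form a ν-null set under the stated hypothesis, so the value of h_J there is immaterial; one may use the convention that division by zero yields 0.) -/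
open scoped BigOperators ENNReal
open MeasureTheory

/-- The functions `h_J` of `1+J` real variables (extra variables beyond the first `J`
are ignored), defined recursively by `h_0(η) = 1` and
`h_J(η;φ_1,…,φ_J) = (η - φ_1 - ⋯ - φ_J)⁻¹ Σ_{j=0}^{J-1} h_j(η;φ_1,…,φ_j) h_{J-j-1}(η;φ_{j+1},…,φ_{J-1})`. -/
noncomputable def hFun : ℕ → ℝ → (ℕ → ℝ) → ℝ
  | 0, _, _ => 1
  | (J+1), η, φ =>
      (η - ∑ i ∈ Finset.range (J+1), φ i)⁻¹ *
        ∑ j ∈ (Finset.range (J+1)).attach,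
          hFun j.1 η φ * hFun (J - j.1) η (fun i => φ (i + j.1))
  termination_by J _ _ => J
  decreasing_by
  · exact Nat.lt_of_lt_of_le (Finset.mem_range.mp j.2) (Nat.le_refl _)
  · exact Nat.lt_succ_of_le (Nat.sub_le J j.1)

/-- Pad a tuple `m : Fin J → ℕ` of indices into a function `ℕ → ℝ` listing `φ_{m_1},…,φ_{m_J}`. -/
noncomputable def padFin (J : ℕ) (φ : ℕ → ℝ) (m : Fin J → ℕ) : ℕ → ℝ :=
  fun n => if h : n < J then φ (m ⟨n, h⟩) else 0

namespace Stmt14Aux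

open scoped NNReal

/-- The multiset of denominators appearing in the tree expansion of `hFun J · φ`. -/
noncomputable def dens : ℕ → (ℕ → ℝ) → Multiset ℝ
  | 0, _ => 0
  | (J+1), φ =>
      ∑ j ∈ (Finset.range (J+1)).attach,
        ({(∑ i ∈ Finset.range (J+1), φ i : ℝ)} + dens j.1 φ
          + dens (J - j.1) (fun i => φ (i + j.1)))
  termination_by J _ => J
  decreasing_by
  · exact Nat.lt_of_lt_of_le (Finset.mem_range.mp j.2) (Nat.le_refl _)
  · exact Nat.lt_succ_of_le (Nat.sub_le J j.1)

lemma one_le_catalan (n : ℕ) : 1 ≤ catalan n := by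
  by_contra h
  have h0 : catalan n = 0 := by omega
  have := Nat.centralBinom_pos n
  rw [← succ_mul_catalan_eq_centralBinom, h0, mul_zero] at this
  omega

lemma card_finsum {ι : Type*} (s : Finset ι) (h : ι → Multiset ℝ) :
    Multiset.card (∑ j ∈ s, h j) = ∑ j ∈ s, Multiset.card (h j) := by
  classical
  induction s using Finset.induction with
  | empty => simp
  | insert _ _ hni ih => simp [Finset.sum_insert hni, ih]

lemma dens_card : ∀ (J : ℕ) (φ : ℕ → ℝ), Multiset.card (dens J φ) ≤ J * catalan J := by
  intro J
  induction J using Nat.strong_induction_on with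
  | _ J IH =>
    intro φ
    cases J with
    | zero => simp [dens]
    | succ K =>
      rw [dens]
      have hcard : Multiset.card
          (∑ j ∈ (Finset.range (K+1)).attach,
            ({(∑ i ∈ Finset.range (K+1), φ i : ℝ)} + dens j.1 φ
              + dens (K - j.1) (fun i => φ (i + j.1))))
          = ∑ j ∈ (Finset.range (K+1)).attach,
            (1 + Multiset.card (dens j.1 φ)
              + Multiset.card (dens (K - j.1) (fun i => φ (i + j.1)))) := by
        rw [card_finsum]
        refine Finset.sum_congr rfl fun j _ => ?_
        simp [Multiset.card_add]
        omega
      rw [hcard]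
      have hle : ∀ j ∈ (Finset.range (K+1)).attach,
          (1 + Multiset.card (dens j.1 φ)
            + Multiset.card (dens (K - j.1) (fun i => φ (i + j.1))))
          ≤ (K+1) * (catalan j.1 * catalan (K - j.1)) := by
        intro j _
        have hj : j.1 < K + 1 := Finset.mem_range.mp j.2
        have h1 := IH j.1 hj φ
        have h2 := IH (K - j.1) (by omega) (fun i => φ (i + j.1))
        have ha := one_le_catalan j.1
        have hb := one_le_catalan (K - j.1)
        have e0 : 1 ≤ catalan j.1 * catalan (K - j.1) := by
          calc 1 = 1 * 1 := by omega
            _ ≤ _ := Nat.mul_le_mul ha hb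
        have e1 : Multiset.card (dens j.1 φ) ≤ j.1 * (catalan j.1 * catalan (K - j.1)) := by
          refine le_trans h1 (Nat.mul_le_mul_left _ ?_)
          exact Nat.le_mul_of_pos_right _ (by omega)
        have e2 : Multiset.card (dens (K - j.1) (fun i => φ (i + j.1)))
            ≤ (K - j.1) * (catalan j.1 * catalan (K - j.1)) := by
          refine le_trans h2 (Nat.mul_le_mul_left _ ?_)
          calc catalan (K - j.1) = 1 * catalan (K - j.1) := by omega
            _ ≤ _ := Nat.mul_le_mul_right _ ha
        calc 1 + Multiset.card (dens j.1 φ)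
              + Multiset.card (dens (K - j.1) (fun i => φ (i + j.1)))
            ≤ catalan j.1 * catalan (K - j.1)
              + j.1 * (catalan j.1 * catalan (K - j.1))
              + (K - j.1) * (catalan j.1 * catalan (K - j.1)) :=
              Nat.add_le_add (Nat.add_le_add e0 e1) e2
          _ = (1 + j.1 + (K - j.1)) * (catalan j.1 * catalan (K - j.1)) := by ring
          _ = (K + 1) * (catalan j.1 * catalan (K - j.1)) := by
              rw [show 1 + j.1 + (K - j.1) = K + 1 by omega]
      calc _ ≤ ∑ j ∈ (Finset.range (K+1)).attach,
            (K+1) * (catalan j.1 * catalan (K - j.1)) := Finset.sum_le_sum hle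
        _ = (K+1) * ∑ j ∈ Finset.range (K+1), catalan j * catalan (K - j) := by
            rw [Finset.sum_attach (Finset.range (K+1))
              (fun j => (K+1) * (catalan j * catalan (K - j))), Finset.mul_sum]
        _ = (K+1) * catalan (K+1) := by
            rw [catalan_succ, Finset.sum_range]

lemma geom2 {w₁ w₂ : ℝ} (h1 : 0 ≤ w₁) (h2 : 0 ≤ w₂) (hw : w₁ + w₂ = 1) (x y : ℝ≥0∞) :
    x ^ w₁ * y ^ w₂ ≤ ENNReal.ofReal w₁ * x + ENNReal.ofReal w₂ * y := by
  rcases eq_or_lt_of_le h1 with h1e | h1p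
  · have hw2 : w₂ = 1 := by linarith
    simp [← h1e, hw2]
  rcases eq_or_lt_of_le h2 with h2e | h2p
  · have hw1 : w₁ = 1 := by linarith
    simp [← h2e, hw1]
  rcases eq_or_ne x ⊤ with rfl | hx
  · have : ENNReal.ofReal w₁ * (⊤ : ℝ≥0∞) = ⊤ :=
      ENNReal.mul_top (by simp [ENNReal.ofReal_eq_zero]; linarith)
    rw [this]
    simp
  rcases eq_or_ne y ⊤ with rfl | hy
  · have : ENNReal.ofReal w₂ * (⊤ : ℝ≥0∞) = ⊤ :=
      ENNReal.mul_top (by simp [ENNReal.ofReal_eq_zero]; linarith)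
    rw [this]
    simp
  lift x to ℝ≥0 using hx
  lift y to ℝ≥0 using hy
  have key := NNReal.geom_mean_le_arith_mean2_weighted w₁.toNNReal w₂.toNNReal x y
    (by
      apply NNReal.coe_injective
      push_cast [Real.coe_toNNReal _ h1, Real.coe_toNNReal _ h2]
      linarith)
  rw [Real.coe_toNNReal _ h1, Real.coe_toNNReal _ h2] at key
  simp only [ENNReal.ofReal]
  rw [← ENNReal.coe_rpow_of_nonneg _ h1, ← ENNReal.coe_rpow_of_nonneg _ h2,
    ← ENNReal.coe_mul, ← ENNReal.coe_mul, ← ENNReal.coe_mul, ← ENNReal.coe_add,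
    ENNReal.coe_le_coe]
  exact key

lemma geom3 {w₁ w₂ w₃ : ℝ} (h1 : 0 ≤ w₁) (h2 : 0 ≤ w₂) (h3 : 0 ≤ w₃)
    (hw : w₁ + w₂ + w₃ = 1) (x y z : ℝ≥0∞) :
    x ^ w₁ * y ^ w₂ * z ^ w₃
      ≤ ENNReal.ofReal w₁ * x + ENNReal.ofReal w₂ * y + ENNReal.ofReal w₃ * z := by
  rcases eq_or_lt_of_le h1 with h1e | h1p
  · have : x ^ w₁ = 1 := by rw [← h1e, ENNReal.rpow_zero]
    rw [this, one_mul, ← h1e]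
    simp only [ENNReal.ofReal_zero, zero_mul, zero_add]
    exact geom2 h2 h3 (by linarith) y z
  rcases eq_or_lt_of_le h2 with h2e | h2p
  · have : y ^ w₂ = 1 := by rw [← h2e, ENNReal.rpow_zero]
    rw [this, mul_one, ← h2e]
    simp only [ENNReal.ofReal_zero, zero_mul, add_zero]
    exact geom2 h1 h3 (by linarith) x z
  rcases eq_or_lt_of_le h3 with h3e | h3p
  · have : z ^ w₃ = 1 := by rw [← h3e, ENNReal.rpow_zero]
    rw [this, mul_one, ← h3e]
    simp only [ENNReal.ofReal_zero, zero_mul, add_zero]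
    exact geom2 h1 h2 (by linarith) x y
  rcases eq_or_ne x ⊤ with rfl | hx
  · have : ENNReal.ofReal w₁ * (⊤ : ℝ≥0∞) = ⊤ :=
      ENNReal.mul_top (by simp [ENNReal.ofReal_eq_zero]; linarith)
    simp [this]
  rcases eq_or_ne y ⊤ with rfl | hy
  · have : ENNReal.ofReal w₂ * (⊤ : ℝ≥0∞) = ⊤ :=
      ENNReal.mul_top (by simp [ENNReal.ofReal_eq_zero]; linarith)
    simp [this]
  rcases eq_or_ne z ⊤ with rfl | hz
  · have : ENNReal.ofReal w₃ * (⊤ : ℝ≥0∞) = ⊤ :=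
      ENNReal.mul_top (by simp [ENNReal.ofReal_eq_zero]; linarith)
    simp [this]
  lift x to ℝ≥0 using hx
  lift y to ℝ≥0 using hy
  lift z to ℝ≥0 using hz
  have key := NNReal.geom_mean_le_arith_mean3_weighted w₁.toNNReal w₂.toNNReal w₃.toNNReal x y z
    (by
      apply NNReal.coe_injective
      push_cast [Real.coe_toNNReal _ h1, Real.coe_toNNReal _ h2, Real.coe_toNNReal _ h3]
      linarith)
  rw [Real.coe_toNNReal _ h1, Real.coe_toNNReal _ h2, Real.coe_toNNReal _ h3] at key
  simp only [ENNReal.ofReal]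
  rw [← ENNReal.coe_rpow_of_nonneg _ h1, ← ENNReal.coe_rpow_of_nonneg _ h2,
    ← ENNReal.coe_rpow_of_nonneg _ h3, ← ENNReal.coe_mul, ← ENNReal.coe_mul, ← ENNReal.coe_mul,
    ← ENNReal.coe_mul, ← ENNReal.coe_mul, ← ENNReal.coe_add, ← ENNReal.coe_add,
    ENNReal.coe_le_coe]
  exact key

lemma rpow_sum_le {ι : Type*} (s : Finset ι) (f : ι → ℝ≥0∞) {p : ℝ}
    (hp0 : 0 < p) (hp1 : p ≤ 1) :
    (∑ i ∈ s, f i) ^ p ≤ ∑ i ∈ s, f i ^ p := by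
  classical
  induction s using Finset.induction with
  | empty => simp [ENNReal.zero_rpow_of_pos hp0]
  | insert _ _ h ih =>
      rw [Finset.sum_insert h, Finset.sum_insert h]
      exact le_trans (ENNReal.rpow_add_le_add_rpow _ _ hp0.le hp1) (add_le_add_right ih _)

lemma msum_finsum {ι : Type*} (g : ℝ → ℝ≥0∞) (s : Finset ι) (h : ι → Multiset ℝ) :
    ((∑ j ∈ s, h j).map g).sum = ∑ j ∈ s, ((h j).map g).sum := by
  classical
  induction s using Finset.induction with
  | empty => simp
  | insert _ _ hni ih => simp [Finset.sum_insert hni, ih]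

lemma lint_msum (ν : Measure ℝ) (m : Multiset ℝ) (g : ℝ → ℝ → ℝ≥0∞)
    (hg : ∀ ψ, Measurable (g ψ)) :
    ∫⁻ η, (m.map (fun ψ => g ψ η)).sum ∂ν = (m.map (fun ψ => ∫⁻ η, g ψ η ∂ν)).sum := by
  induction m using Multiset.induction with
  | empty => simp
  | cons a s ih =>
      simp only [Multiset.map_cons, Multiset.sum_cons]
      rw [lintegral_add_left (hg a), ih]

lemma hFun_zero (η : ℝ) (φ : ℕ → ℝ) : hFun 0 η φ = 1 := by
  rw [hFun]

lemma dens_zero (φ : ℕ → ℝ) : dens 0 φ = 0 := by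
  rw [dens]

lemma key {γ : ℝ} (hγ0 : 0 < γ) (hγ1 : γ ≤ 1) :
    ∀ (J : ℕ) (φ : ℕ → ℝ) (η : ℝ), 1 ≤ J →
      ENNReal.ofReal |hFun J η φ| ^ (γ / (J : ℝ)) ≤
        (J : ℝ≥0∞)⁻¹ *
          ((dens J φ).map (fun ψ => ENNReal.ofReal |η - ψ| ^ (-γ))).sum := by
  intro J
  induction J using Nat.strong_induction_on with
  | _ J IH =>
  intro φ η hJ1
  cases J with
  | zero => exact absurd hJ1 (by omega)
  | succ K =>
  have hK1 : (0:ℝ) < ((K+1 : ℕ) : ℝ) := by positivity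
  have hK1' : (1:ℝ) ≤ ((K+1:ℕ):ℝ) := by exact_mod_cast Nat.succ_le_succ (Nat.zero_le K)
  set c : ℝ := γ / ((K+1 : ℕ) : ℝ) with hc
  have hc0 : 0 < c := div_pos hγ0 hK1
  have hc1 : c ≤ 1 := by
    rw [hc, div_le_one hK1]
    linarith
  set S : ℝ := ∑ i ∈ Finset.range (K+1), φ i with hS
  -- Step A : pointwise domination of `hFun (K+1)`
  have hA : ENNReal.ofReal |hFun (K+1) η φ| ≤
      (ENNReal.ofReal |η - S|)⁻¹ *
        ∑ j ∈ (Finset.range (K+1)).attach,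
          ENNReal.ofReal |hFun j.1 η φ|
            * ENNReal.ofReal |hFun (K - j.1) η (fun i => φ (i + j.1))| := by
    rw [hFun, ← hS, abs_mul, abs_inv, ENNReal.ofReal_mul (by positivity)]
    refine mul_le_mul' ?_ ?_
    · rcases eq_or_ne (η - S) 0 with h0 | h0
      · simp [h0]
      · rw [ENNReal.ofReal_inv_of_pos (abs_pos.2 h0)]
    · calc ENNReal.ofReal |∑ j ∈ (Finset.range (K+1)).attach,
            hFun j.1 η φ * hFun (K - j.1) η (fun i => φ (i + j.1))|
          ≤ ENNReal.ofReal (∑ j ∈ (Finset.range (K+1)).attach,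
            |hFun j.1 η φ * hFun (K - j.1) η (fun i => φ (i + j.1))|) :=
            ENNReal.ofReal_le_ofReal (Finset.abs_sum_le_sum_abs _ _)
        _ = ∑ j ∈ (Finset.range (K+1)).attach,
            ENNReal.ofReal |hFun j.1 η φ * hFun (K - j.1) η (fun i => φ (i + j.1))| :=
            ENNReal.ofReal_sum_of_nonneg (fun _ _ => abs_nonneg _)
        _ = _ := Finset.sum_congr rfl
            (fun j _ => by rw [abs_mul, ENNReal.ofReal_mul (abs_nonneg _)])
  -- Step B : raise to the power `c` and distribute
  have hB : ENNReal.ofReal |hFun (K+1) η φ| ^ c ≤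
      ∑ j ∈ (Finset.range (K+1)).attach,
        ENNReal.ofReal |η - S| ^ (-c) *
          (ENNReal.ofReal |hFun j.1 η φ| ^ c
            * ENNReal.ofReal |hFun (K - j.1) η (fun i => φ (i + j.1))| ^ c) := by
    calc ENNReal.ofReal |hFun (K+1) η φ| ^ c
        ≤ ((ENNReal.ofReal |η - S|)⁻¹ *
            ∑ j ∈ (Finset.range (K+1)).attach,
              ENNReal.ofReal |hFun j.1 η φ|
                * ENNReal.ofReal |hFun (K - j.1) η (fun i => φ (i + j.1))|) ^ c :=
          ENNReal.rpow_le_rpow hA hc0.le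
      _ = (ENNReal.ofReal |η - S|)⁻¹ ^ c *
            (∑ j ∈ (Finset.range (K+1)).attach,
              ENNReal.ofReal |hFun j.1 η φ|
                * ENNReal.ofReal |hFun (K - j.1) η (fun i => φ (i + j.1))|) ^ c :=
          ENNReal.mul_rpow_of_nonneg _ _ hc0.le
      _ ≤ (ENNReal.ofReal |η - S|)⁻¹ ^ c *
            ∑ j ∈ (Finset.range (K+1)).attach,
              (ENNReal.ofReal |hFun j.1 η φ|
                * ENNReal.ofReal |hFun (K - j.1) η (fun i => φ (i + j.1))|) ^ c :=
          mul_le_mul_right (rpow_sum_le _ _ hc0 hc1) _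
      _ = _ := by
          rw [Finset.mul_sum]
          refine Finset.sum_congr rfl fun j _ => ?_
          rw [ENNReal.mul_rpow_of_nonneg _ _ hc0.le, ENNReal.inv_rpow, ← ENNReal.rpow_neg]
  -- Step C : bound each summand via AM-GM and the induction hypothesis
  have hC : ∀ j ∈ (Finset.range (K+1)).attach,
      ENNReal.ofReal |η - S| ^ (-c) *
        (ENNReal.ofReal |hFun j.1 η φ| ^ c
          * ENNReal.ofReal |hFun (K - j.1) η (fun i => φ (i + j.1))| ^ c)
      ≤ ((K+1:ℕ) : ℝ≥0∞)⁻¹ *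
          ((({S} : Multiset ℝ) + dens j.1 φ + dens (K - j.1) (fun i => φ (i + j.1))).map
            (fun ψ => ENNReal.ofReal |η - ψ| ^ (-γ))).sum := by
    intro j _
    have hjK : j.1 ≤ K := by have := Finset.mem_range.mp j.2; omega
    have hjm : (j.1 : ℝ) + ((K - j.1 : ℕ) : ℝ) = (K : ℝ) := by
      have : j.1 + (K - j.1) = K := by omega
      exact_mod_cast this
    have hw1 : (0:ℝ) ≤ 1 / ((K+1:ℕ):ℝ) := by positivity
    have hw2 : (0:ℝ) ≤ (j.1:ℝ) / ((K+1:ℕ):ℝ) := by positivity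
    have hw3 : (0:ℝ) ≤ ((K - j.1:ℕ):ℝ) / ((K+1:ℕ):ℝ) := by positivity
    have hwsum : 1 / ((K+1:ℕ):ℝ) + (j.1:ℝ) / ((K+1:ℕ):ℝ) + ((K - j.1:ℕ):ℝ) / ((K+1:ℕ):ℝ)
        = 1 := by
      rw [← add_div, ← add_div, div_eq_one_iff_eq (ne_of_gt hK1)]
      push_cast
      linarith
    -- rewrite the three factors as weighted powers
    have hX : ENNReal.ofReal |η - S| ^ (-c)
        = (ENNReal.ofReal |η - S| ^ (-γ)) ^ (1 / ((K+1:ℕ):ℝ)) := by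
      rw [← ENNReal.rpow_mul]
      congr 1
      rw [hc]
      ring
    have hY : ENNReal.ofReal |hFun j.1 η φ| ^ c
        = (ENNReal.ofReal |hFun j.1 η φ| ^ (γ / (j.1:ℝ))) ^ ((j.1:ℝ) / ((K+1:ℕ):ℝ)) := by
      rcases Nat.eq_zero_or_pos j.1 with h0 | hpos
      · rw [h0]
        simp [hFun_zero]
      · rw [← ENNReal.rpow_mul]
        congr 1
        have hj0 : (j.1:ℝ) ≠ 0 := Nat.cast_ne_zero.2 (by omega)
        rw [hc, div_mul_div_comm, mul_comm γ _, mul_div_mul_left _ _ hj0]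

    have hZ : ENNReal.ofReal |hFun (K - j.1) η (fun i => φ (i + j.1))| ^ c
        = (ENNReal.ofReal |hFun (K - j.1) η (fun i => φ (i + j.1))| ^ (γ / ((K - j.1:ℕ):ℝ)))
            ^ (((K - j.1:ℕ):ℝ) / ((K+1:ℕ):ℝ)) := by
      rcases Nat.eq_zero_or_pos (K - j.1) with h0 | hpos
      · rw [h0]
        simp [hFun_zero]
      · rw [← ENNReal.rpow_mul]
        congr 1
        have hm0 : ((K - j.1:ℕ):ℝ) ≠ 0 := Nat.cast_ne_zero.2 (by omega)
        rw [hc, div_mul_div_comm, mul_comm γ _, mul_div_mul_left _ _ hm0]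
    rw [hX, hY, hZ, ← mul_assoc]
    refine le_trans (geom3 hw1 hw2 hw3 hwsum _ _ _) ?_
    -- bound the three arithmetic-mean terms
    have t1 : ENNReal.ofReal (1 / ((K+1:ℕ):ℝ)) * (ENNReal.ofReal |η - S| ^ (-γ))
        = ((K+1:ℕ) : ℝ≥0∞)⁻¹ * (ENNReal.ofReal |η - S| ^ (-γ)) := by
      rw [one_div, ENNReal.ofReal_inv_of_pos hK1, ENNReal.ofReal_natCast]
    have t2 : ENNReal.ofReal ((j.1:ℝ) / ((K+1:ℕ):ℝ))
          * (ENNReal.ofReal |hFun j.1 η φ| ^ (γ / (j.1:ℝ)))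
        ≤ ((K+1:ℕ) : ℝ≥0∞)⁻¹ *
            ((dens j.1 φ).map (fun ψ => ENNReal.ofReal |η - ψ| ^ (-γ))).sum := by
      rcases Nat.eq_zero_or_pos j.1 with h0 | hpos
      · rw [h0]
        simp [dens_zero]
      · have hIH := IH j.1 (by omega) φ η hpos
        calc ENNReal.ofReal ((j.1:ℝ) / ((K+1:ℕ):ℝ))
              * (ENNReal.ofReal |hFun j.1 η φ| ^ (γ / (j.1:ℝ)))
            ≤ ENNReal.ofReal ((j.1:ℝ) / ((K+1:ℕ):ℝ)) *
                ((j.1 : ℝ≥0∞)⁻¹ *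
                  ((dens j.1 φ).map (fun ψ => ENNReal.ofReal |η - ψ| ^ (-γ))).sum) :=
              mul_le_mul_right hIH _
          _ = _ := by
              rw [ENNReal.ofReal_div_of_pos hK1, ENNReal.ofReal_natCast, ENNReal.ofReal_natCast,
                div_eq_mul_inv, mul_mul_mul_comm,
                ENNReal.mul_inv_cancel (Nat.cast_ne_zero.2 (by omega)) (ENNReal.natCast_ne_top _),
                one_mul]
    have t3 : ENNReal.ofReal (((K - j.1:ℕ):ℝ) / ((K+1:ℕ):ℝ))
          * (ENNReal.ofReal |hFun (K - j.1) η (fun i => φ (i + j.1))| ^ (γ / ((K - j.1:ℕ):ℝ)))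
        ≤ ((K+1:ℕ) : ℝ≥0∞)⁻¹ *
            ((dens (K - j.1) (fun i => φ (i + j.1))).map
              (fun ψ => ENNReal.ofReal |η - ψ| ^ (-γ))).sum := by
      rcases Nat.eq_zero_or_pos (K - j.1) with h0 | hpos
      · rw [h0]
        simp [dens_zero]
      · have hIH := IH (K - j.1) (by omega) (fun i => φ (i + j.1)) η hpos
        calc ENNReal.ofReal (((K - j.1:ℕ):ℝ) / ((K+1:ℕ):ℝ))
              * (ENNReal.ofReal |hFun (K - j.1) η (fun i => φ (i + j.1))| ^ (γ / ((K - j.1:ℕ):ℝ)))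
            ≤ ENNReal.ofReal (((K - j.1:ℕ):ℝ) / ((K+1:ℕ):ℝ)) *
                (((K - j.1 : ℕ) : ℝ≥0∞)⁻¹ *
                  ((dens (K - j.1) (fun i => φ (i + j.1))).map
                    (fun ψ => ENNReal.ofReal |η - ψ| ^ (-γ))).sum) :=
              mul_le_mul_right hIH _
          _ = _ := by
              rw [ENNReal.ofReal_div_of_pos hK1, ENNReal.ofReal_natCast, ENNReal.ofReal_natCast,
                div_eq_mul_inv, mul_mul_mul_comm,
                ENNReal.mul_inv_cancel (Nat.cast_ne_zero.2 (by omega)) (ENNReal.natCast_ne_top _),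
                one_mul]
    have hmap : ((({S} : Multiset ℝ) + dens j.1 φ + dens (K - j.1) (fun i => φ (i + j.1))).map
          (fun ψ => ENNReal.ofReal |η - ψ| ^ (-γ))).sum
        = ENNReal.ofReal |η - S| ^ (-γ)
          + ((dens j.1 φ).map (fun ψ => ENNReal.ofReal |η - ψ| ^ (-γ))).sum
          + ((dens (K - j.1) (fun i => φ (i + j.1))).map
              (fun ψ => ENNReal.ofReal |η - ψ| ^ (-γ))).sum := by
      simp [Multiset.map_add, Multiset.sum_add, add_assoc]
    rw [hmap, mul_add, mul_add, t1]
    exact add_le_add (add_le_add le_rfl t2) t3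
  -- assemble
  have hd : dens (K+1) φ = ∑ j ∈ (Finset.range (K+1)).attach,
      (({S} : Multiset ℝ) + dens j.1 φ + dens (K - j.1) (fun i => φ (i + j.1))) := by
    rw [dens, ← hS]
  calc ENNReal.ofReal |hFun (K+1) η φ| ^ (γ / ((K+1:ℕ) : ℝ))
      ≤ ∑ j ∈ (Finset.range (K+1)).attach,
          ENNReal.ofReal |η - S| ^ (-c) *
            (ENNReal.ofReal |hFun j.1 η φ| ^ c
              * ENNReal.ofReal |hFun (K - j.1) η (fun i => φ (i + j.1))| ^ c) := hB
    _ ≤ ∑ j ∈ (Finset.range (K+1)).attach,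
          ((K+1:ℕ) : ℝ≥0∞)⁻¹ *
            ((({S} : Multiset ℝ) + dens j.1 φ + dens (K - j.1) (fun i => φ (i + j.1))).map
              (fun ψ => ENNReal.ofReal |η - ψ| ^ (-γ))).sum := Finset.sum_le_sum hC
    _ = ((K+1:ℕ) : ℝ≥0∞)⁻¹ *
          ((dens (K+1) φ).map (fun ψ => ENNReal.ofReal |η - ψ| ^ (-γ))).sum := by
        rw [← Finset.mul_sum, hd, msum_finsum]

end Stmt14Aux

open Stmt14Aux

theorem stmt14 (ν : Measure ℝ) [IsFiniteMeasure ν]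
    (J : ℕ) (hJ : 1 ≤ J) (α : ℝ) (hα : 0 < α)
    (D : ℝ≥0∞) (hD : D ≠ ⊤)
    (hint : ∀ ψ : ℝ, ∫⁻ η, (ENNReal.ofReal |η - ψ|) ^ (-((J : ℝ) * α)) ∂ν ≤ D)
    (φ : Fin J → ℝ) :
    ∫⁻ η, ENNReal.ofReal (|hFun J η (fun i => if h : i < J then φ ⟨i, h⟩ else 0)| ^ α) ∂ν
      ≤ ((2 * J).choose J : ℝ≥0∞) / ((J : ℝ≥0∞) + 1) * D := by
  classical
  set φ' : ℕ → ℝ := fun i => if h : i < J then φ ⟨i, h⟩ else 0 with hφ'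
  set γ : ℝ := (J : ℝ) * α with hγ
  have hγ0 : 0 < γ := mul_pos (by exact_mod_cast hJ) hα
  have hmeas : ∀ ψ : ℝ, Measurable (fun η : ℝ => ENNReal.ofReal |η - ψ| ^ (-γ)) := fun ψ =>
    ((measurable_id.sub measurable_const).abs.ennreal_ofReal).pow measurable_const
  by_cases hγ1 : γ ≤ 1
  · -- case `J * α ≤ 1`
    have hJR : ((J:ℕ):ℝ) ≠ 0 := Nat.cast_ne_zero.2 (by omega)
    have hαγ : α = γ / (J:ℝ) := by rw [hγ]; field_simp
    calc ∫⁻ η, ENNReal.ofReal (|hFun J η φ'| ^ α) ∂ν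
        = ∫⁻ η, (ENNReal.ofReal |hFun J η φ'|) ^ (γ / (J:ℝ)) ∂ν := by
          refine lintegral_congr fun η => ?_
          rw [← hαγ]
          exact (ENNReal.ofReal_rpow_of_nonneg (abs_nonneg _) hα.le).symm
      _ ≤ ∫⁻ η, (J : ℝ≥0∞)⁻¹ *
            ((dens J φ').map (fun ψ => ENNReal.ofReal |η - ψ| ^ (-γ))).sum ∂ν :=
          lintegral_mono fun η => key hγ0 hγ1 J φ' η hJ
      _ = (J : ℝ≥0∞)⁻¹ * ∫⁻ η,
            ((dens J φ').map (fun ψ => ENNReal.ofReal |η - ψ| ^ (-γ))).sum ∂ν :=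
          lintegral_const_mul' _ _ (by
            exact ENNReal.inv_ne_top.2 (by exact_mod_cast Nat.cast_ne_zero.2 (by omega : J ≠ 0)))
      _ = (J : ℝ≥0∞)⁻¹ *
            ((dens J φ').map (fun ψ => ∫⁻ η, ENNReal.ofReal |η - ψ| ^ (-γ) ∂ν)).sum := by
          rw [lint_msum ν _ _ hmeas]
      _ ≤ (J : ℝ≥0∞)⁻¹ * ((Multiset.card (dens J φ')) • D) := by
          refine mul_le_mul_right ?_ _
          have hb : ∀ x ∈ (dens J φ').map (fun ψ => ∫⁻ η, ENNReal.ofReal |η - ψ| ^ (-γ) ∂ν),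
              x ≤ D := by
            intro x hx
            obtain ⟨ψ, _, rfl⟩ := Multiset.mem_map.mp hx
            exact hint ψ
          simpa [Multiset.card_map] using Multiset.sum_le_card_nsmul _ _ hb
      _ ≤ (J : ℝ≥0∞)⁻¹ * ((J * catalan J) • D) := by
          refine mul_le_mul_right ?_ _
          rw [nsmul_eq_mul, nsmul_eq_mul]
          exact mul_le_mul_left (by exact_mod_cast dens_card J φ') _
      _ = (catalan J : ℝ≥0∞) * D := by
          rw [nsmul_eq_mul]
          push_cast
          rw [← mul_assoc, ← mul_assoc,
            ENNReal.inv_mul_cancel (by exact_mod_cast Nat.cast_ne_zero.2 (by omega : J ≠ 0))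
              (ENNReal.natCast_ne_top _), one_mul]
      _ = ((2 * J).choose J : ℝ≥0∞) / ((J : ℝ≥0∞) + 1) * D := by
          congr 1
          rw [ENNReal.eq_div_iff (by simp)
            (ENNReal.add_ne_top.2 ⟨ENNReal.natCast_ne_top _, ENNReal.one_ne_top⟩)]
          have hnat : (J + 1) * catalan J = (2 * J).choose J :=
            succ_mul_catalan_eq_centralBinom J
          exact_mod_cast hnat
  · -- case `1 < J * α`: the hypothesis forces `ν = 0`
    push_neg at hγ1
    have base : ∀ (t δ : ℝ), 0 < δ →
        ν (Set.Ioc t (t + δ)) ≤ D * (ENNReal.ofReal δ) ^ γ := by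
      intro t δ hδ
      have hmono : ∀ η ∈ Set.Ioc t (t + δ),
          (ENNReal.ofReal δ) ^ (-γ) ≤ ENNReal.ofReal |η - (t + δ)| ^ (-γ) := by
        intro η hη
        have habs : |η - (t + δ)| ≤ δ := abs_le.2 ⟨by linarith [hη.1], by linarith [hη.2]⟩
        rw [ENNReal.rpow_neg, ENNReal.rpow_neg]
        exact ENNReal.inv_le_inv.2
          (ENNReal.rpow_le_rpow (ENNReal.ofReal_le_ofReal habs) hγ0.le)
      have hset : (ENNReal.ofReal δ) ^ (-γ) * ν (Set.Ioc t (t + δ))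
          ≤ ∫⁻ η, ENNReal.ofReal |η - (t + δ)| ^ (-γ) ∂ν := by
        rw [← setLIntegral_const]
        exact le_trans (setLIntegral_mono (hmeas (t + δ)) hmono)
          (setLIntegral_le_lintegral _ _)
      have hDb : (ENNReal.ofReal δ) ^ (-γ) * ν (Set.Ioc t (t + δ)) ≤ D :=
        le_trans hset (hint (t + δ))
      have hpos : (ENNReal.ofReal δ) ^ (-γ) ≠ 0 :=
        (ENNReal.rpow_pos (ENNReal.ofReal_pos.2 hδ) ENNReal.ofReal_ne_top).ne'
      have hne : (ENNReal.ofReal δ) ^ (-γ) ≠ ⊤ := by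
        rw [ENNReal.rpow_neg]
        exact ENNReal.inv_ne_top.2
          (ENNReal.rpow_pos (ENNReal.ofReal_pos.2 hδ) ENNReal.ofReal_ne_top).ne'
      calc ν (Set.Ioc t (t + δ))
          = ((ENNReal.ofReal δ) ^ (-γ))⁻¹ *
              ((ENNReal.ofReal δ) ^ (-γ) * ν (Set.Ioc t (t + δ))) := by
            rw [← mul_assoc, ENNReal.inv_mul_cancel hpos hne, one_mul]
        _ ≤ ((ENNReal.ofReal δ) ^ (-γ))⁻¹ * D := mul_le_mul_right hDb _
        _ = D * (ENNReal.ofReal δ) ^ γ := by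
            rw [ENNReal.rpow_neg, inv_inv, mul_comm]
    have iter : ∀ (n : ℕ) (t δ : ℝ), 0 < δ →
        ν (Set.Ioc t (t + δ)) ≤ 2^n * (D * (ENNReal.ofReal (δ / 2^n)) ^ γ) := by
      intro n
      induction n with
      | zero => intro t δ hδ; simpa using base t δ hδ
      | succ n ih =>
        intro t δ hδ
        have hsplit : Set.Ioc t (t + δ) ⊆
            Set.Ioc t (t + δ/2) ∪ Set.Ioc (t + δ/2) (t + δ/2 + δ/2) := by
          intro x hx
          rcases le_or_gt x (t + δ/2) with h | h
          · exact Or.inl ⟨hx.1, h⟩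
          · exact Or.inr ⟨h, by have := hx.2; linarith⟩
        have hhalf : δ / 2 / 2^n = δ / 2^(n+1) := by
          rw [div_div, ← pow_succ']
        calc ν (Set.Ioc t (t + δ))
            ≤ ν (Set.Ioc t (t + δ/2)) + ν (Set.Ioc (t + δ/2) (t + δ/2 + δ/2)) :=
            le_trans (measure_mono hsplit) (measure_union_le _ _)
          _ ≤ 2^n * (D * (ENNReal.ofReal (δ/2 / 2^n)) ^ γ)
              + 2^n * (D * (ENNReal.ofReal (δ/2 / 2^n)) ^ γ) :=
            add_le_add (ih t (δ/2) (by linarith)) (ih (t + δ/2) (δ/2) (by linarith))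
          _ = 2^(n+1) * (D * (ENNReal.ofReal (δ / 2^(n+1))) ^ γ) := by
            rw [hhalf]
            ring
    have hnull : ∀ t : ℝ, ν (Set.Ioc t (t + 1)) = 0 := by
      intro t
      have hb : ∀ n : ℕ, ν (Set.Ioc t (t + 1)) ≤ D * ((2:ℝ≥0∞) ^ (1 - γ)) ^ n := by
        intro n
        refine le_trans (iter n t 1 one_pos) (le_of_eq ?_)
        have e1 : ENNReal.ofReal ((1:ℝ) / 2^n) = (2:ℝ≥0∞) ^ (-(n:ℝ)) := by
          rw [one_div, ENNReal.ofReal_inv_of_pos (by positivity),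
            ENNReal.ofReal_pow (by norm_num), ENNReal.ofReal_ofNat,
            ← ENNReal.rpow_natCast, ← ENNReal.rpow_neg]
        rw [e1, ← ENNReal.rpow_mul,
          show ((2:ℝ≥0∞))^(n:ℕ) = (2:ℝ≥0∞)^((n:ℝ)) from (ENNReal.rpow_natCast _ n).symm,
          mul_left_comm]
        congr 1
        rw [← ENNReal.rpow_add _ _ (by norm_num) (by norm_num),
          show (2:ℝ≥0∞) ^ (1 - γ) = (2:ℝ≥0∞) ^ ((1:ℝ) - γ) from rfl,
          ← ENNReal.rpow_natCast ((2:ℝ≥0∞) ^ ((1:ℝ) - γ)) n, ← ENNReal.rpow_mul]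
        congr 1
        ring
      have h2 : ((2:ℝ≥0∞) ^ ((1:ℝ) - γ)) < 1 :=
        ENNReal.rpow_lt_one_of_one_lt_of_neg (by norm_num) (by linarith)
      have hlim : Filter.Tendsto (fun n : ℕ => D * ((2:ℝ≥0∞) ^ ((1:ℝ) - γ)) ^ n)
          Filter.atTop (nhds 0) := by
        simpa using ENNReal.Tendsto.const_mul
          (ENNReal.tendsto_pow_atTop_nhds_zero_of_lt_one h2) (Or.inr hD)
      exact le_antisymm (ge_of_tendsto' hlim hb) zero_le
    have hν : ν = 0 := by
      rw [← Measure.measure_univ_eq_zero, ← iUnion_Ioc_intCast (α := ℝ)]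
      exact measure_iUnion_null fun n => hnull (n : ℝ)
    rw [hν]
    simp
end

section
/- Let γ : (0,∞) → ℝ be a function of bounded variation and let W : (0,∞) → ℝ be Lebesgue measurable. Suppose there exist T > 0 and constants 0 < δ ≤ Δ < ∞ such that for every a ≥ 0, δ ≤ ∫_a^{a+T} |W(x)| dx ≤ Δ. If ∫_0^∞ |W(x) γ(x)| dx < ∞, then (δ/T) ∫_0^∞ |γ(y)| dy ≤ ∫_0^∞ |W(x) γ(x)| dx + Var(γ,(0,∞)) · Δ; in particular, γ ∈ L¹(0,∞). -/
open scoped BigOperators ENNReal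
open MeasureTheory

theorem stmt16 (γ : ℝ → ℝ) (hγ : BoundedVariationOn γ (Set.Ioi 0))
    (W : ℝ → ℝ) (hW : Measurable W)
    (T δ Δ : ℝ) (hT : 0 < T) (hδ : 0 < δ) (hδΔ : δ ≤ Δ)
    (hlow : ∀ a : ℝ, 0 ≤ a →
      ENNReal.ofReal δ ≤ ∫⁻ x in Set.Ioc a (a + T), (‖W x‖₊ : ℝ≥0∞))
    (hup : ∀ a : ℝ, 0 ≤ a →
      (∫⁻ x in Set.Ioc a (a + T), (‖W x‖₊ : ℝ≥0∞)) ≤ ENNReal.ofReal Δ)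
    (hint : ∫⁻ x in Set.Ioi (0:ℝ), (‖W x * γ x‖₊ : ℝ≥0∞) < ⊤) :
    ENNReal.ofReal (δ / T) * ∫⁻ y in Set.Ioi (0:ℝ), (‖γ y‖₊ : ℝ≥0∞)
        ≤ (∫⁻ x in Set.Ioi (0:ℝ), (‖W x * γ x‖₊ : ℝ≥0∞)) +
          eVariationOn γ (Set.Ioi 0) * ENNReal.ofReal Δ
      ∧ IntegrableOn γ (Set.Ioi 0) := by
  -- interval pieces
  set I : ℕ → Set ℝ := fun k => Set.Ioc (k * T) (k * T + T) with hI
  have hIle : ∀ k : ℕ, (0:ℝ) ≤ k * T := fun k => by positivity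
  have hIsub : ∀ k : ℕ, I k ⊆ Set.Ioi 0 := by
    intro k x hx
    exact lt_of_le_of_lt (hIle k) hx.1
  have hcover : Set.Ioi (0:ℝ) = ⋃ k, I k := by
    apply Set.Subset.antisymm
    · intro x hx
      have hx0 : 0 < x := hx
      have hx0T : 0 < x / T := div_pos hx0 hT
      set n := ⌈x / T⌉₊ with hn
      have hn1 : 1 ≤ n := Nat.one_le_iff_ne_zero.2 (by
        intro h
        have := Nat.le_ceil (x / T)
        rw [← hn, h] at this
        simp at this
        exact absurd this (not_le.2 hx0T))
      have hcast : ((n - 1 : ℕ) : ℝ) = (n : ℝ) - 1 := by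
        push_cast [Nat.cast_sub hn1]; ring
      refine Set.mem_iUnion.2 ⟨n - 1, ?_, ?_⟩
      · have h1 : ((n:ℝ) - 1) < x / T := by
          by_contra h
          push_neg at h
          rw [← hcast] at h
          have : n ≤ n - 1 := Nat.ceil_le.2 h
          omega
        rw [hcast]
        calc ((n:ℝ) - 1) * T < (x / T) * T := by
              exact mul_lt_mul_of_pos_right h1 hT
          _ = x := div_mul_cancel₀ x hT.ne'
      · have h2 : x / T ≤ (n : ℝ) := Nat.le_ceil _
        rw [hcast]
        calc x = (x / T) * T := (div_mul_cancel₀ x hT.ne').symm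
          _ ≤ (n:ℝ) * T := mul_le_mul_of_nonneg_right h2 hT.le
          _ = ((n:ℝ) - 1) * T + T := by ring
    · exact Set.iUnion_subset hIsub
  have hmeas : ∀ k, MeasurableSet (I k) := fun k => measurableSet_Ioc
  have hdisj : Pairwise (Function.onFun Disjoint I) := by
    intro i j hij
    wlog h : i < j generalizing i j
    · exact (this hij.symm (by omega)).symm
    apply Set.disjoint_left.2
    intro x hxi hxj
    have : x ≤ i * T + T := hxi.2
    have h2 : (j:ℝ) * T < x := hxj.1
    have : (j:ℝ) * T < i * T + T := lt_of_lt_of_le h2 hxi.2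
    have hji : (i:ℝ) + 1 ≤ j := by exact_mod_cast h
    nlinarith
  -- per interval quantities
  set A : ℕ → ℝ≥0∞ := fun k => ∫⁻ x in I k, (‖W x * γ x‖₊ : ℝ≥0∞) with hA
  set V : ℕ → ℝ≥0∞ := fun k => eVariationOn γ (I k) with hV
  set B : ℕ → ℝ≥0∞ := fun k => ∫⁻ y in I k, (‖γ y‖₊ : ℝ≥0∞) with hB
  -- pointwise bound
  have hpt : ∀ k, ∀ y ∈ I k,
      ENNReal.ofReal δ * (‖γ y‖₊ : ℝ≥0∞) ≤ A k + V k * ENNReal.ofReal Δ := by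
    intro k y hy
    have h1 : ENNReal.ofReal δ * (‖γ y‖₊ : ℝ≥0∞)
        ≤ (∫⁻ x in I k, (‖W x‖₊ : ℝ≥0∞)) * (‖γ y‖₊ : ℝ≥0∞) :=
      mul_le_mul_left (hlow _ (hIle k)) _
    have h2 : (∫⁻ x in I k, (‖W x‖₊ : ℝ≥0∞)) * (‖γ y‖₊ : ℝ≥0∞)
        = ∫⁻ x in I k, (‖W x‖₊ : ℝ≥0∞) * (‖γ y‖₊ : ℝ≥0∞) :=
      (lintegral_mul_const _ hW.nnnorm.coe_nnreal_ennreal).symm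
    have h3 : ∀ x ∈ I k, (‖W x‖₊ : ℝ≥0∞) * (‖γ y‖₊ : ℝ≥0∞)
        ≤ (‖W x * γ x‖₊ : ℝ≥0∞) + (‖W x‖₊ : ℝ≥0∞) * V k := by
      intro x hx
      have hedist : edist (γ x) (γ y) ≤ V k := eVariationOn.edist_le γ hx hy
      have htri : (‖γ y‖₊ : ℝ≥0∞) ≤ (‖γ x‖₊ : ℝ≥0∞) + edist (γ x) (γ y) := by
        rw [edist_nndist, nndist_eq_nnnorm]
        have : ‖γ y‖₊ ≤ ‖γ x‖₊ + ‖γ x - γ y‖₊ := by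
          have hxy : γ y = γ x - (γ x - γ y) := (sub_sub_cancel _ _).symm
          conv_lhs => rw [hxy]
          exact nnnorm_sub_le _ _
        exact_mod_cast this
      calc (‖W x‖₊ : ℝ≥0∞) * (‖γ y‖₊ : ℝ≥0∞)
          ≤ (‖W x‖₊ : ℝ≥0∞) * ((‖γ x‖₊ : ℝ≥0∞) + edist (γ x) (γ y)) :=
            mul_le_mul_right htri _
        _ = (‖W x‖₊ : ℝ≥0∞) * (‖γ x‖₊ : ℝ≥0∞) + (‖W x‖₊ : ℝ≥0∞) * edist (γ x) (γ y) := by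
            rw [mul_add]
        _ ≤ (‖W x * γ x‖₊ : ℝ≥0∞) + (‖W x‖₊ : ℝ≥0∞) * V k := by
            gcongr
            · rw [nnnorm_mul]; push_cast; rfl
    have h4 : (∫⁻ x in I k, (‖W x‖₊ : ℝ≥0∞) * (‖γ y‖₊ : ℝ≥0∞))
        ≤ ∫⁻ x in I k, ((‖W x * γ x‖₊ : ℝ≥0∞) + (‖W x‖₊ : ℝ≥0∞) * V k) := by
      refine setLIntegral_mono' (hmeas k) h3
    have hVne : V k ≠ ⊤ := by
      have : V k ≤ eVariationOn γ (Set.Ioi 0) := eVariationOn.mono γ (hIsub k)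
      exact ne_top_of_le_ne_top hγ this
    have h5 : (∫⁻ x in I k, ((‖W x * γ x‖₊ : ℝ≥0∞) + (‖W x‖₊ : ℝ≥0∞) * V k))
        = A k + (∫⁻ x in I k, (‖W x‖₊ : ℝ≥0∞)) * V k := by
      rw [lintegral_add_right _ (hW.nnnorm.coe_nnreal_ennreal.mul_const _), lintegral_mul_const _ hW.nnnorm.coe_nnreal_ennreal]
    have h6 : (∫⁻ x in I k, (‖W x‖₊ : ℝ≥0∞)) * V k ≤ V k * ENNReal.ofReal Δ := by
      rw [mul_comm]
      exact mul_le_mul_right (hup _ (hIle k)) _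
    calc ENNReal.ofReal δ * (‖γ y‖₊ : ℝ≥0∞)
        ≤ ∫⁻ x in I k, (‖W x‖₊ : ℝ≥0∞) * (‖γ y‖₊ : ℝ≥0∞) := h2 ▸ h1
      _ ≤ A k + (∫⁻ x in I k, (‖W x‖₊ : ℝ≥0∞)) * V k := le_trans h4 (le_of_eq h5)
      _ ≤ A k + V k * ENNReal.ofReal Δ := add_le_add_right h6 _
  -- integrate over I k
  have hIk : ∀ k, ENNReal.ofReal δ * B k ≤ (A k + V k * ENNReal.ofReal Δ) * ENNReal.ofReal T := by
    intro k
    have hvol : volume (I k) = ENNReal.ofReal T := by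
      rw [hI]; simp [Real.volume_Ioc]
    calc ENNReal.ofReal δ * B k
        = ∫⁻ y in I k, ENNReal.ofReal δ * (‖γ y‖₊ : ℝ≥0∞) := by
          rw [hB, lintegral_const_mul' _ _ ENNReal.ofReal_ne_top]
      _ ≤ ∫⁻ _ in I k, (A k + V k * ENNReal.ofReal Δ) := setLIntegral_mono' (hmeas k) (hpt k)
      _ = (A k + V k * ENNReal.ofReal Δ) * ENNReal.ofReal T := by
          rw [setLIntegral_const, hvol]
  -- sum of variations
  have hVsum : ∑' k, V k ≤ eVariationOn γ (Set.Ioi 0) := by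
    apply ENNReal.tsum_le_of_sum_range_le
    intro n
    have key : ∀ m : ℕ, (∑ k ∈ Finset.range m,
        eVariationOn γ (Set.Ioi 0 ∩ Set.Icc (k * T) (k * T + T)))
        = eVariationOn γ (Set.Ioi 0 ∩ Set.Icc 0 (m * T)) := by
      intro m
      induction m with
      | zero =>
        simp only [Finset.sum_range_zero, Nat.cast_zero, zero_mul]
        rw [eq_comm]
        apply eVariationOn.subsingleton
        intro a ha b hb
        have := ha.2; have := hb.2
        simp only [Set.mem_inter_iff, Set.mem_Icc, Set.mem_Ioi] at ha hb
        linarith [ha.1, ha.2.1, ha.2.2, hb.1, hb.2.1, hb.2.2]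
      | succ m ih =>
        rw [Finset.sum_range_succ, ih]
        rcases Nat.eq_zero_or_pos m with hm | hm
        · subst hm
          have h0 : eVariationOn γ (Set.Ioi 0 ∩ Set.Icc 0 ((0:ℕ) * T)) = 0 := by
            apply eVariationOn.subsingleton
            intro a ha b hb
            simp only [Set.mem_inter_iff, Set.mem_Icc, Set.mem_Ioi, Nat.cast_zero,
              zero_mul] at ha hb
            linarith [ha.1, ha.2.1, ha.2.2, hb.1, hb.2.1, hb.2.2]
          rw [h0, zero_add]
          norm_num
        · have hmT : (0:ℝ) < m * T := by
            have : (1:ℝ) ≤ m := by exact_mod_cast hm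
            nlinarith
          have := eVariationOn.Icc_add_Icc γ (s := Set.Ioi 0) (a := 0) (b := m * T)
            (c := m * T + T) hmT.le (by linarith) hmT
          rw [this]
          congr 2
          push_cast; ring
    calc ∑ k ∈ Finset.range n, V k
        ≤ ∑ k ∈ Finset.range n,
            eVariationOn γ (Set.Ioi 0 ∩ Set.Icc (k * T) (k * T + T)) := by
          apply Finset.sum_le_sum
          intro k _
          apply eVariationOn.mono
          intro x hx
          exact ⟨hIsub k hx, hx.1.le, hx.2⟩
      _ = eVariationOn γ (Set.Ioi 0 ∩ Set.Icc 0 (n * T)) := key n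
      _ ≤ eVariationOn γ (Set.Ioi 0) := eVariationOn.mono γ Set.inter_subset_left
  -- decompose integrals
  have hAsum : ∑' k, A k = ∫⁻ x in Set.Ioi (0:ℝ), (‖W x * γ x‖₊ : ℝ≥0∞) := by
    rw [hcover, lintegral_iUnion hmeas hdisj]
  have hBsum : ∑' k, B k = ∫⁻ y in Set.Ioi (0:ℝ), (‖γ y‖₊ : ℝ≥0∞) := by
    rw [hcover, lintegral_iUnion hmeas hdisj]
  -- main estimate before division
  set R : ℝ≥0∞ := (∫⁻ x in Set.Ioi (0:ℝ), (‖W x * γ x‖₊ : ℝ≥0∞)) +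
      eVariationOn γ (Set.Ioi 0) * ENNReal.ofReal Δ with hR
  have hmain : ENNReal.ofReal δ * ∫⁻ y in Set.Ioi (0:ℝ), (‖γ y‖₊ : ℝ≥0∞)
      ≤ R * ENNReal.ofReal T := by
    rw [← hBsum, ← ENNReal.tsum_mul_left]
    calc ∑' k, ENNReal.ofReal δ * B k
        ≤ ∑' k, (A k + V k * ENNReal.ofReal Δ) * ENNReal.ofReal T :=
          ENNReal.tsum_le_tsum hIk
      _ = ((∑' k, A k) + (∑' k, V k) * ENNReal.ofReal Δ) * ENNReal.ofReal T := by
          rw [ENNReal.tsum_mul_right, ENNReal.tsum_add, ENNReal.tsum_mul_right]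
      _ ≤ R * ENNReal.ofReal T := by
          gcongr
          rw [hR, hAsum]
          gcongr
  -- divide by T
  have hTne : ENNReal.ofReal T ≠ 0 := by
    simp [ENNReal.ofReal_eq_zero, not_le, hT]
  have hfinal : ENNReal.ofReal (δ / T) * ∫⁻ y in Set.Ioi (0:ℝ), (‖γ y‖₊ : ℝ≥0∞) ≤ R := by
    rw [ENNReal.ofReal_div_of_pos hT, div_eq_mul_inv, mul_assoc, mul_comm (ENNReal.ofReal T)⁻¹,
      ← mul_assoc, ← div_eq_mul_inv]
    rw [ENNReal.div_le_iff hTne ENNReal.ofReal_ne_top]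
    exact hmain
  refine ⟨hfinal, ?_⟩
  -- integrability
  have hRlt : R < ⊤ := by
    rw [hR]
    exact ENNReal.add_lt_top.2 ⟨hint,
      ENNReal.mul_lt_top (lt_top_iff_ne_top.2 hγ) ENNReal.ofReal_lt_top⟩
  have hSlt : (∫⁻ y in Set.Ioi (0:ℝ), (‖γ y‖₊ : ℝ≥0∞)) < ⊤ := by
    by_contra h
    push_neg at h
    have hS : (∫⁻ y in Set.Ioi (0:ℝ), (‖γ y‖₊ : ℝ≥0∞)) = ⊤ := top_le_iff.mp h
    rw [hS, ENNReal.mul_top (by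
      simp [ENNReal.ofReal_eq_zero, not_le]
      positivity)] at hfinal
    exact hRlt.ne (top_le_iff.mp hfinal)
  obtain ⟨p, q, hp, hq, hpq⟩ :=
    hγ.locallyBoundedVariationOn.exists_monotoneOn_sub_monotoneOn
  have hmeasγ : AEMeasurable γ (volume.restrict (Set.Ioi (0:ℝ))) := by
    have hpm := aemeasurable_restrict_of_monotoneOn measurableSet_Ioi hp (μ := volume)
    have hqm := aemeasurable_restrict_of_monotoneOn measurableSet_Ioi hq (μ := volume)
    rw [hpq]
    exact hpm.sub hqm
  exact ⟨hmeasγ.aestronglyMeasurable, hSlt⟩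
end

section
/- Let p ∈ [1,∞), let γ : (0,∞) → ℝ be a function of bounded variation, let (c_k)_{k≥1} be complex numbers with Σ_{k=1}^∞ |c_k| < ∞ and with c_k ≠ 0 for at least one k, let (φ_k)_{k≥1} be pairwise distinct real numbers, and set W(x) = Σ_{k=1}^∞ c_k e^{−iφ_k x}. If ∫_0^∞ |W(x) γ(x)|^p dx < ∞, then ∫_0^∞ |γ(x)|^p dx < ∞. -/
open scoped BigOperators ENNReal NNReal
open MeasureTheory Set

lemma osc_bound (θ a b : ℝ) (hθ : θ ≠ 0) (hab : a ≤ b) :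
    ‖∫ x in Ioc a b, Complex.exp (Complex.I * θ * x)‖ ≤ 2 / |θ| := by
  have h0 : (Complex.I * (θ:ℂ)) ≠ 0 := by simp [Complex.I_ne_zero, hθ]
  rw [← intervalIntegral.integral_of_le hab]
  have heq : (∫ x in a..b, Complex.exp (Complex.I * θ * x))
      = (Complex.exp (Complex.I * θ * b) - Complex.exp (Complex.I * θ * a)) / (Complex.I * θ) := by
    simpa [mul_assoc] using integral_exp_mul_complex (a := a) (b := b) h0
  rw [heq, norm_div]
  have h1 : ∀ t : ℝ, ‖Complex.exp (Complex.I * θ * t)‖ = 1 := by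
    intro t; rw [Complex.norm_exp]; simp
  have h2 : ‖Complex.exp (Complex.I * θ * b) - Complex.exp (Complex.I * θ * a)‖ ≤ 2 := by
    calc ‖Complex.exp (Complex.I * θ * b) - Complex.exp (Complex.I * θ * a)‖
        ≤ ‖Complex.exp (Complex.I * θ * b)‖ + ‖Complex.exp (Complex.I * θ * a)‖ := norm_sub_le _ _
      _ = 2 := by rw [h1, h1]; norm_num
  have h3 : ‖Complex.I * (θ:ℂ)‖ = |θ| := by rw [norm_mul]; simp
  rw [h3]
  gcongr

lemma const_int (a b : ℝ) (hab : a ≤ b) (z : ℂ) :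
    (∫ _x in Ioc a b, z) = ((b - a : ℝ) : ℂ) * z := by
  rw [setIntegral_const, Real.volume_real_Ioc_of_le hab]
  simp [smul_eq_mul]

variable (c : ℕ → ℂ) (φ : ℕ → ℝ)

lemma norm_term (k : ℕ) (x : ℝ) :
    ‖c k * Complex.exp (-Complex.I * φ k * x)‖ = ‖c k‖ := by
  rw [norm_mul, Complex.norm_exp]
  simp

lemma contW (hc : Summable fun k => ‖c k‖) :
    Continuous fun x : ℝ => ∑' k, c k * Complex.exp (-Complex.I * φ k * x) := by
  apply continuous_tsum (u := fun k => ‖c k‖) _ hc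
  · intro k x; exact le_of_eq (norm_term c φ k x)
  · intro k; continuity

lemma normW_le (hc : Summable fun k => ‖c k‖) (x : ℝ) :
    ‖∑' k, c k * Complex.exp (-Complex.I * φ k * x)‖ ≤ ∑' k, ‖c k‖ := by
  have hs : (fun k => ‖c k * Complex.exp (-Complex.I * φ k * x)‖) = fun k => ‖c k‖ :=
    funext fun k => norm_term c φ k x
  refine (norm_tsum_le_tsum_norm ?_).trans ?_
  · rw [hs]; exact hc
  · rw [hs]

lemma swap_int (hc : Summable fun k => ‖c k‖) (k0 : ℕ) (a b : ℝ) :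
    (∫ x in Ioc a b, (∑' k, c k * Complex.exp (-Complex.I * φ k * x)) * Complex.exp (Complex.I * φ k0 * x))
      = ∑' k, c k * ∫ x in Ioc a b, Complex.exp (Complex.I * (φ k0 - φ k) * x) := by
  have hcomb : ∀ (k : ℕ) (x : ℝ),
      c k * Complex.exp (-Complex.I * φ k * x) * Complex.exp (Complex.I * φ k0 * x)
        = c k * Complex.exp (Complex.I * (φ k0 - φ k) * x) := by
    intro k x
    rw [mul_assoc, ← Complex.exp_add]
    ring_nf
  have h1 : ∀ x : ℝ, (∑' k, c k * Complex.exp (-Complex.I * φ k * x)) * Complex.exp (Complex.I * φ k0 * x)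
      = ∑' k, c k * Complex.exp (Complex.I * (φ k0 - φ k) * x) := by
    intro x
    rw [← tsum_mul_right]
    exact tsum_congr fun k => hcomb k x
  simp_rw [h1]
  rw [integral_tsum]
  · exact tsum_congr fun k => integral_const_mul _ _
  · intro k
    apply Continuous.aestronglyMeasurable
    continuity
  · have : ∀ k : ℕ, (∫⁻ x in Ioc a b, ‖c k * Complex.exp (Complex.I * (φ k0 - φ k) * x)‖₊)
        = ‖c k‖₊ * volume (Ioc a b) := by
      intro k
      have hn : ∀ x : ℝ, (‖c k * Complex.exp (Complex.I * (φ k0 - φ k) * x)‖₊ : ENNReal) = ‖c k‖₊ := by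
        intro x
        congr 1
        ext
        rw [coe_nnnorm, coe_nnnorm, norm_mul, Complex.norm_exp]
        simp
      simp_rw [hn]
      rw [lintegral_const, Measure.restrict_apply MeasurableSet.univ, univ_inter]
    simp_rw [enorm_eq_nnnorm, this]
    rw [ENNReal.tsum_mul_right]
    apply ENNReal.mul_ne_top _ (by rw [Real.volume_Ioc]; exact ENNReal.ofReal_ne_top)
    rw [← ENNReal.coe_tsum]
    · exact ENNReal.coe_ne_top
    · simpa [← NNReal.summable_coe, coe_nnnorm] using hc

set_option maxHeartbeats 2000000 in
lemma lemA (hc : Summable fun k => ‖c k‖) (hne : ∃ k, c k ≠ 0) (hφ : Function.Injective φ) :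
    ∃ m T ρ : ℝ, 0 < m ∧ 0 < T ∧ 0 < ρ ∧ ∀ a : ℝ,
      ENNReal.ofReal ρ ≤ volume (Ioc a (a+T) ∩ {x : ℝ | m ≤ ‖∑' k, c k * Complex.exp (-Complex.I * φ k * x)‖}) := by
  classical
  obtain ⟨k0, hk0⟩ := hne
  have hc0 : 0 < ‖c k0‖ := norm_pos_iff.mpr hk0
  obtain ⟨c0, hc0def⟩ : ∃ c0 : ℝ, c0 = ‖c k0‖ := ⟨_, rfl⟩
  obtain ⟨S, hSdef⟩ : ∃ S : ℝ, S = ∑' k, ‖c k‖ := ⟨_, rfl⟩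
  rw [← hc0def] at hc0
  have hc0S : c0 ≤ S := by
    rw [hc0def, hSdef]; exact hc.le_tsum k0 (fun _ _ => norm_nonneg _)
  have hS : 0 < S := lt_of_lt_of_le hc0 hc0S
  obtain ⟨N, hN⟩ : ∃ N : ℕ, (∑' k, ‖c (k + N)‖) ≤ c0 / 4 := by
    have h := tendsto_sum_nat_add (f := fun k => ‖c k‖)
    obtain ⟨N, hN⟩ := (h.eventually (gt_mem_nhds (show (0:ℝ) < c0/4 by linarith))).exists
    exact ⟨N, le_of_lt hN⟩
  obtain ⟨C, hCdef⟩ : ∃ C : ℝ,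
      C = ∑ k ∈ Finset.range N, (if k = k0 then 0 else 2 / |φ k0 - φ k|) * ‖c k‖ := ⟨_, rfl⟩
  have hC0 : 0 ≤ C := by
    rw [hCdef]
    apply Finset.sum_nonneg
    intro k _
    apply mul_nonneg _ (norm_nonneg _)
    split
    · exact le_rfl
    · positivity
  obtain ⟨T, hTdef⟩ : ∃ T : ℝ, T = max 1 (4 * C / c0) := ⟨_, rfl⟩
  have hT : 0 < T := by rw [hTdef]; exact lt_of_lt_of_le one_pos (le_max_left _ _)
  have hCT : C ≤ T * c0 / 4 := by
    have h1 : 4 * C / c0 ≤ T := hTdef ▸ le_max_right _ _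
    rw [div_le_iff₀ hc0] at h1
    linarith
  refine ⟨c0/4, T, T * c0 / (4 * S), by linarith, hT, by positivity, fun a => ?_⟩
  obtain ⟨b, hbdef⟩ : ∃ b : ℝ, b = a + T := ⟨_, rfl⟩
  have hab : a ≤ b := by rw [hbdef]; linarith
  have hba : b - a = T := by rw [hbdef]; ring
  obtain ⟨J, hJ⟩ : ∃ J : ℕ → ℂ,
      J = fun k => ∫ x in Ioc a b, Complex.exp (Complex.I * (φ k0 - φ k) * x) := ⟨_, rfl⟩
  have hJk0 : J k0 = ((T:ℝ):ℂ) := by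
    rw [hJ]
    simp only [sub_self, mul_zero, zero_mul, Complex.exp_zero]
    rw [const_int a b hab 1, hba, mul_one]
  have hJle : ∀ k, ‖J k‖ ≤ T := by
    intro k
    rw [hJ]
    have hfin : volume (Ioc a b) < ⊤ := by rw [Real.volume_Ioc]; exact ENNReal.ofReal_lt_top
    refine (norm_setIntegral_le_of_norm_le_const (C := 1) hfin ?_).trans ?_
    · intro x _
      rw [Complex.norm_exp]
      simp
    · rw [one_mul, Real.volume_real_Ioc_of_le hab]
      rw [hba]
  have hJosc : ∀ k, k ≠ k0 → ‖J k‖ ≤ 2 / |φ k0 - φ k| := by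
    intro k hk
    have hθ : φ k0 - φ k ≠ 0 := sub_ne_zero.mpr fun h => hk (hφ h).symm
    rw [hJ]
    have := osc_bound (φ k0 - φ k) a b hθ hab
    simpa using this
  have hsumf : Summable fun k => c k * J k := by
    apply Summable.of_norm_bounded (g := fun k => ‖c k‖ * T) (hc.mul_right T)
    intro k
    rw [norm_mul]
    exact mul_le_mul_of_nonneg_left (hJle k) (norm_nonneg _)
  obtain ⟨G, hG⟩ : ∃ G : ℂ,
      G = ∫ x in Ioc a b, (∑' k, c k * Complex.exp (-Complex.I * φ k * x)) * Complex.exp (Complex.I * φ k0 * x) := ⟨_, rfl⟩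
  have hGsum : G = ∑' k, c k * J k := by rw [hG, hJ]; exact swap_int c φ hc k0 a b
  have hGsplit : G = c k0 * J k0 + ∑' k, (if k = k0 then 0 else c k * J k) := by
    rw [hGsum, hsumf.tsum_eq_add_tsum_ite k0]
  have hRnormsum : Summable fun k => (if k = k0 then (0:ℝ) else ‖c k * J k‖) := by
    apply Summable.of_nonneg_of_le _ _ (hc.mul_right T)
    · intro k; split
      · exact le_rfl
      · positivity
    · intro k; split
      · positivity
      · rw [norm_mul]; exact mul_le_mul_of_nonneg_left (hJle k) (norm_nonneg _)
  have hR : ‖∑' k, (if k = k0 then 0 else c k * J k)‖ ≤ C + T * (c0/4) := by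
    have hnormite : ∀ k : ℕ, ‖(if k = k0 then (0:ℂ) else c k * J k)‖
        = (if k = k0 then (0:ℝ) else ‖c k * J k‖) := by
      intro k; split
      · exact norm_zero
      · rfl
    have h1 : ‖∑' k, (if k = k0 then 0 else c k * J k)‖
        ≤ ∑' k, (if k = k0 then (0:ℝ) else ‖c k * J k‖) := by
      refine (norm_tsum_le_tsum_norm ?_).trans (le_of_eq (tsum_congr hnormite))
      exact hRnormsum.congr fun k => (hnormite k).symm
    refine h1.trans ?_
    rw [← hRnormsum.sum_add_tsum_nat_add N]
    have hpart1 : (∑ k ∈ Finset.range N, (if k = k0 then (0:ℝ) else ‖c k * J k‖)) ≤ C := by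
      rw [hCdef]
      apply Finset.sum_le_sum
      intro k _
      split
      · simp
      · rename_i h
        rw [norm_mul, mul_comm (2 / |φ k0 - φ k|) ‖c k‖]
        exact mul_le_mul_of_nonneg_left (hJosc k h) (norm_nonneg _)
    have hpart2 : (∑' k, (if (k + N) = k0 then (0:ℝ) else ‖c (k + N) * J (k + N)‖)) ≤ T * (c0/4) := by
      have h2 : ∀ k : ℕ, (if (k + N) = k0 then (0:ℝ) else ‖c (k + N) * J (k + N)‖) ≤ T * ‖c (k + N)‖ := by
        intro k
        split
        · positivity
        · rw [norm_mul, mul_comm]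
          exact mul_le_mul_of_nonneg_right (hJle _) (norm_nonneg _)
      calc (∑' k, (if (k + N) = k0 then (0:ℝ) else ‖c (k + N) * J (k + N)‖))
          ≤ ∑' k, T * ‖c (k + N)‖ :=
            Summable.tsum_le_tsum h2 ((summable_nat_add_iff N).mpr hRnormsum)
              (((summable_nat_add_iff N).mpr hc).mul_left T)
        _ = T * ∑' k, ‖c (k + N)‖ := tsum_mul_left
        _ ≤ T * (c0/4) := mul_le_mul_of_nonneg_left hN (le_of_lt hT)
    linarith
  have hGlow : T * c0 / 2 ≤ ‖G‖ := by
    have h1 : ‖c k0 * J k0‖ = c0 * T := by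
      rw [norm_mul, hJk0, ← hc0def, Complex.norm_real, Real.norm_eq_abs, abs_of_pos hT]
    have h2 : ‖c k0 * J k0‖ ≤ ‖G‖ + ‖∑' k, (if k = k0 then 0 else c k * J k)‖ := by
      calc ‖c k0 * J k0‖ = ‖G - ∑' k, (if k = k0 then 0 else c k * J k)‖ := by
            rw [hGsplit]; ring_nf
        _ ≤ ‖G‖ + ‖∑' k, (if k = k0 then 0 else c k * J k)‖ := norm_sub_le _ _
    have h3 : C + T * (c0/4) ≤ T * c0 / 2 := by linarith
    rw [h1] at h2
    nlinarith [hR]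
  -- upper bound for ‖G‖ via the sublevel/superlevel split
  have hWc : Continuous fun x : ℝ => ∑' k, c k * Complex.exp (-Complex.I * φ k * x) :=
    contW c φ hc
  obtain ⟨A, hA⟩ : ∃ A : Set ℝ,
      A = {x : ℝ | c0/4 ≤ ‖∑' k, c k * Complex.exp (-Complex.I * φ k * x)‖} := ⟨_, rfl⟩
  have hAm : MeasurableSet A := by
    rw [hA]
    exact (isClosed_le continuous_const hWc.norm).measurableSet
  have hsfin : volume (Ioc a b) < ⊤ := by rw [Real.volume_Ioc]; exact ENNReal.ofReal_lt_top
  have hEfin : volume (Ioc a b ∩ A) < ⊤ :=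
    lt_of_le_of_lt (measure_mono inter_subset_left) hsfin
  have hDfin : volume (Ioc a b \ A) < ⊤ :=
    lt_of_le_of_lt (measure_mono diff_subset) hsfin
  have hWint : IntegrableOn (fun x : ℝ => ‖∑' k, c k * Complex.exp (-Complex.I * φ k * x)‖)
      (Ioc a b) volume := hWc.norm.integrableOn_Ioc
  have hGup : ‖G‖ ≤ ∫ x in Ioc a b, ‖∑' k, c k * Complex.exp (-Complex.I * φ k * x)‖ := by
    rw [hG]
    refine (norm_integral_le_integral_norm _).trans (le_of_eq (setIntegral_congr_fun measurableSet_Ioc ?_))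
    intro x _
    show ‖_ * _‖ = _
    rw [norm_mul]
    have : ‖Complex.exp (Complex.I * (φ k0 : ℂ) * x)‖ = 1 := by
      rw [Complex.norm_exp]; simp
    rw [this, mul_one]
  have hsplit : (∫ x in Ioc a b, ‖∑' k, c k * Complex.exp (-Complex.I * φ k * x)‖)
      = (∫ x in Ioc a b ∩ A, ‖∑' k, c k * Complex.exp (-Complex.I * φ k * x)‖)
        + ∫ x in Ioc a b \ A, ‖∑' k, c k * Complex.exp (-Complex.I * φ k * x)‖ := by
    rw [← integral_inter_add_diff hAm hWint]
  have hint1 : (∫ x in Ioc a b ∩ A, ‖∑' k, c k * Complex.exp (-Complex.I * φ k * x)‖)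
      ≤ S * (volume (Ioc a b ∩ A)).toReal := by
    refine le_trans (le_abs_self _) ?_
    rw [← Real.norm_eq_abs]
    refine (norm_setIntegral_le_of_norm_le_const (C := S) hEfin ?_).trans le_rfl
    · intro x _
      rw [Real.norm_eq_abs, abs_of_nonneg (norm_nonneg _)]
      rw [hSdef]
      exact normW_le c φ hc x
  have hint2 : (∫ x in Ioc a b \ A, ‖∑' k, c k * Complex.exp (-Complex.I * φ k * x)‖)
      ≤ (c0/4) * T := by
    have hle : (∫ x in Ioc a b \ A, ‖∑' k, c k * Complex.exp (-Complex.I * φ k * x)‖)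
        ≤ (c0/4) * (volume (Ioc a b \ A)).toReal := by
      refine le_trans (le_abs_self _) ?_
      rw [← Real.norm_eq_abs]
      refine norm_setIntegral_le_of_norm_le_const (C := c0/4) hDfin ?_
      · intro x hx
        rw [Real.norm_eq_abs, abs_of_nonneg (norm_nonneg _)]
        have : x ∉ A := hx.2
        rw [hA] at this
        exact le_of_lt (lt_of_not_ge this)
    refine hle.trans ?_
    have h1 : (volume (Ioc a b \ A)).toReal ≤ T := by
      have := measure_mono (μ := volume) (diff_subset (s := Ioc a b) (t := A))
      rw [Real.volume_Ioc, hba] at this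
      calc (volume (Ioc a b \ A)).toReal ≤ (ENNReal.ofReal T).toReal :=
            ENNReal.toReal_mono ENNReal.ofReal_ne_top this
        _ = T := ENNReal.toReal_ofReal (le_of_lt hT)
    exact mul_le_mul_of_nonneg_left h1 (by linarith)
  have hekey : T * c0 / (4 * S) ≤ (volume (Ioc a b ∩ A)).toReal := by
    have h := hGlow.trans (hGup.trans (le_of_eq hsplit))
    have h2 : T * c0 / 4 ≤ S * (volume (Ioc a b ∩ A)).toReal := by linarith
    rw [div_le_iff₀ (by positivity)]
    nlinarith [ENNReal.toReal_nonneg (a := volume (Ioc a b ∩ A))]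
  rw [← hbdef, ← hA]
  calc ENNReal.ofReal (T * c0 / (4 * S)) ≤ ENNReal.ofReal ((volume (Ioc a b ∩ A)).toReal) :=
        ENNReal.ofReal_le_ofReal hekey
    _ = volume (Ioc a b ∩ A) := ENNReal.ofReal_toReal hEfin.ne


lemma rpow_sum_le (a b : ℝ≥0∞) (p : ℝ) (hp : 0 ≤ p) :
    (a + b) ^ p ≤ 2 ^ p * (a ^ p + b ^ p) := by
  have h1 : a + b ≤ 2 * max a b := by
    rcases le_total a b with h | h
    · calc a + b ≤ b + b := by gcongr
        _ = 2 * b := (two_mul b).symm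
        _ ≤ 2 * max a b := by gcongr; exact le_max_right a b
    · calc a + b ≤ a + a := by gcongr
        _ = 2 * a := (two_mul a).symm
        _ ≤ 2 * max a b := by gcongr; exact le_max_left a b
  calc (a + b) ^ p ≤ (2 * max a b) ^ p := ENNReal.rpow_le_rpow h1 hp
    _ = 2 ^ p * (max a b) ^ p := ENNReal.mul_rpow_of_nonneg _ _ hp
    _ ≤ 2 ^ p * (a ^ p + b ^ p) := by
        gcongr
        rcases le_total a b with h | h
        · rw [max_eq_right h]; exact le_add_self
        · rw [max_eq_left h]; exact self_le_add_right _ _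

lemma var_tsum_le (γ : ℝ → ℝ) (T : ℝ) (hT : 0 < T) :
    (∑' n : ℕ, eVariationOn γ (Ioc (T * n) (T * n + T))) ≤ eVariationOn γ (Ioi 0) := by
  have hsub : ∀ n : ℕ, Ioc (T * n) (T * n + T) ⊆ Ioi (0:ℝ) ∩ Icc (T * n) (T * n + T) := by
    intro n x hx
    have hn : (0:ℝ) ≤ T * n := by positivity
    exact ⟨lt_of_le_of_lt hn hx.1, le_of_lt hx.1, hx.2⟩
  have hvw : ∀ n : ℕ, eVariationOn γ (Ioc (T * n) (T * n + T))
      ≤ eVariationOn γ (Ioi (0:ℝ) ∩ Icc (T * n) (T * n + T)) :=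
    fun n => eVariationOn.mono γ (hsub n)
  have key : ∀ K : ℕ, (∑ n ∈ Finset.range (K+1),
      eVariationOn γ (Ioi (0:ℝ) ∩ Icc (T * n) (T * n + T)))
      = eVariationOn γ (Ioi (0:ℝ) ∩ Icc (T * 0) (T * K + T)) := by
    intro K
    induction K with
    | zero => simp
    | succ K ih =>
      rw [Finset.sum_range_succ, ih]
      have hmem : (T * (K + 1) : ℝ) ∈ Ioi (0:ℝ) := by
        simp only [mem_Ioi]; positivity
      have h1 : (T * 0 : ℝ) ≤ T * (K+1) := by rw [mul_zero]; positivity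
      have h2 : (T * (K+1) : ℝ) ≤ T * (K+1) + T := by linarith
      have := eVariationOn.Icc_add_Icc γ (a := (T*0:ℝ)) (b := (T*(K+1):ℝ)) (c := (T*(K+1)+T:ℝ))
        h1 h2 hmem (s := Ioi (0:ℝ))
      have hc1 : (T * ((K:ℝ)+1)) = T * (K:ℝ) + T := by ring
      have hc2 : ((K+1 : ℕ) : ℝ) = (K:ℝ) + 1 := by push_cast; ring
      rw [hc1] at this
      rw [hc2, hc1]
      exact this
  calc (∑' n : ℕ, eVariationOn γ (Ioc (T * n) (T * n + T)))
      ≤ ∑' n : ℕ, eVariationOn γ (Ioi (0:ℝ) ∩ Icc (T * n) (T * n + T)) :=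
        ENNReal.tsum_le_tsum hvw
    _ ≤ eVariationOn γ (Ioi 0) := by
        rw [ENNReal.tsum_eq_iSup_sum]
        apply iSup_le
        intro s
        obtain ⟨K, hK⟩ := s.exists_nat_subset_range
        calc (∑ n ∈ s, eVariationOn γ (Ioi (0:ℝ) ∩ Icc (T * n) (T * n + T)))
            ≤ ∑ n ∈ Finset.range (K+1), eVariationOn γ (Ioi (0:ℝ) ∩ Icc (T * n) (T * n + T)) :=
              Finset.sum_le_sum_of_subset (hK.trans (Finset.range_subset_range.mpr (by omega)))
          _ = eVariationOn γ (Ioi (0:ℝ) ∩ Icc (T * 0) (T * K + T)) := key K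
          _ ≤ eVariationOn γ (Ioi 0) := eVariationOn.mono γ inter_subset_left

lemma cover_Ioi (T : ℝ) (hT : 0 < T) : Ioi (0:ℝ) ⊆ ⋃ n : ℕ, Ioc (T * n) (T * n + T) := by
  intro x hx
  have hx0 : 0 < x := hx
  have hk : 0 < ⌈x / T⌉₊ := Nat.ceil_pos.mpr (by positivity)
  obtain ⟨k, hkk⟩ : ∃ k : ℕ, ⌈x / T⌉₊ = k + 1 := ⟨⌈x / T⌉₊ - 1, by omega⟩
  refine mem_iUnion.mpr ⟨k, ?_, ?_⟩
  · have : (k : ℝ) < x / T := by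
      have := Nat.lt_ceil.mp (show k < ⌈x / T⌉₊ by omega)
      exact_mod_cast this
    calc T * k = (k:ℝ) * T := by ring
      _ < x / T * T := by gcongr
      _ = x := by field_simp
  · have h2 : x / T ≤ (k:ℝ) + 1 := by
      have := Nat.le_ceil (x / T)
      rw [hkk] at this
      exact_mod_cast this
    calc x = x / T * T := by field_simp
      _ ≤ ((k:ℝ) + 1) * T := by gcongr
      _ = T * k + T := by ring

lemma Ioc_pairwise_disjoint (T : ℝ) (hT : 0 < T) :
    Pairwise (Function.onFun Disjoint fun n : ℕ => Ioc (T * n) (T * n + T)) := by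
  intro i j hij
  rcases hij.lt_or_gt with h | h
  · apply Set.Ioc_disjoint_Ioc.mpr
    have : (i:ℝ) + 1 ≤ (j:ℝ) := by exact_mod_cast h
    calc min (T * i + T) (T * j + T) ≤ T * i + T := min_le_left _ _
      _ ≤ T * j := by nlinarith
      _ ≤ max (T * i) (T * j) := le_max_right _ _
  · apply Set.Ioc_disjoint_Ioc.mpr
    have : (j:ℝ) + 1 ≤ (i:ℝ) := by exact_mod_cast h
    calc min (T * i + T) (T * j + T) ≤ T * j + T := min_le_right _ _
      _ ≤ T * i := by nlinarith
      _ ≤ max (T * i) (T * j) := le_max_left _ _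

open scoped BigOperators ENNReal

set_option maxHeartbeats 2000000 in
theorem stmt17 (p : ℝ) (hp : 1 ≤ p)
    (γ : ℝ → ℝ) (hγ : BoundedVariationOn γ (Set.Ioi 0))
    (c : ℕ → ℂ) (hc : Summable fun k => ‖c k‖) (hne : ∃ k, c k ≠ 0)
    (φ : ℕ → ℝ) (hφ : Function.Injective φ)
    (hWγ : ∫⁻ x in Set.Ioi (0:ℝ),
        (‖(∑' k, c k * Complex.exp (-Complex.I * φ k * x)) * γ x‖₊ : ℝ≥0∞) ^ p < ⊤) :
    ∫⁻ x in Set.Ioi (0:ℝ), (‖γ x‖₊ : ℝ≥0∞) ^ p < ⊤ := by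
  classical
  have hp0 : 0 ≤ p := by linarith
  obtain ⟨m, T, ρ, hm, hT, hρ, hA⟩ := lemA c φ hc hne hφ
  have hVne : eVariationOn γ (Ioi 0) ≠ ⊤ := hγ
  obtain ⟨In, hIn⟩ : ∃ f : ℕ → Set ℝ, f = fun n : ℕ => Ioc (T * n) (T * n + T) := ⟨_, rfl⟩
  obtain ⟨A, hAdef⟩ : ∃ A : Set ℝ,
      A = {x : ℝ | m ≤ ‖∑' k, c k * Complex.exp (-Complex.I * φ k * x)‖} := ⟨_, rfl⟩
  obtain ⟨v, hv⟩ : ∃ v : ℕ → ℝ≥0∞, v = fun n => eVariationOn γ (In n) := ⟨_, rfl⟩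
  have hAMeas : MeasurableSet A := by
    rw [hAdef]
    exact (isClosed_le continuous_const (contW c φ hc).norm).measurableSet
  have hInMeas : ∀ n, MeasurableSet (In n) := by rw [hIn]; intro n; exact measurableSet_Ioc
  have hEnMeas : ∀ n, MeasurableSet (In n ∩ A) := fun n => (hInMeas n).inter hAMeas
  have hInSub : ∀ n, In n ⊆ Ioi (0:ℝ) := by
    rw [hIn]; intro n x hx
    have : (0:ℝ) ≤ T * n := by positivity
    exact lt_of_le_of_lt this hx.1
  have hvolIn : ∀ n, volume (In n) = ENNReal.ofReal T := by
    rw [hIn]; intro n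
    rw [Real.volume_Ioc]; congr 1; ring
  have hEn : ∀ n : ℕ, ENNReal.ofReal ρ ≤ volume (In n ∩ A) := by
    intro n
    have := hA (T * n)
    rw [hIn, hAdef]
    exact this
  have hρ0 : ENNReal.ofReal ρ ≠ 0 := (ENNReal.ofReal_pos.mpr hρ).ne'
  have hρtop : ENNReal.ofReal ρ ≠ ⊤ := ENNReal.ofReal_ne_top
  have hm0 : ENNReal.ofReal m ≠ 0 := (ENNReal.ofReal_pos.mpr hm).ne'
  have hmtop : ENNReal.ofReal m ≠ ⊤ := ENNReal.ofReal_ne_top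
  have hminvtop : (ENNReal.ofReal m)⁻¹ ≠ ⊤ := by
    simp [ENNReal.inv_ne_top, hm0]
  have hminvptop : ((ENNReal.ofReal m)⁻¹) ^ p ≠ ⊤ := ENNReal.rpow_ne_top_of_nonneg hp0 hminvtop
  have h2ptop : (2:ℝ≥0∞) ^ p ≠ ⊤ := ENNReal.rpow_ne_top_of_nonneg hp0 (by simp)
  have hTtop : ENNReal.ofReal T ≠ ⊤ := ENNReal.ofReal_ne_top
  -- variation bounds
  have hvV : ∀ n, v n ≤ eVariationOn γ (Ioi 0) := by
    rw [hv]; intro n; exact eVariationOn.mono γ (hInSub n)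
  have hvsum : (∑' n, v n) ≤ eVariationOn γ (Ioi 0) := by
    rw [hv, hIn]
    exact var_tsum_le γ T hT
  -- pointwise γ bound
  have hgy : ∀ n : ℕ, ∀ x ∈ In n, ∀ y ∈ In n,
      (‖γ y‖₊ : ℝ≥0∞) ≤ (‖γ x‖₊ : ℝ≥0∞) + v n := by
    intro n x hx y hy
    have h1 : edist (γ y) (γ x) ≤ v n := by rw [hv]; exact eVariationOn.edist_le γ hy hx
    have h2 : (‖γ y‖₊ : ℝ≥0∞) ≤ (‖γ x‖₊ : ℝ≥0∞) + edist (γ y) (γ x) := by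
      rw [edist_nndist, nndist_eq_nnnorm_sub, ← ENNReal.coe_add, ENNReal.coe_le_coe]
      calc ‖γ y‖₊ = ‖γ x + (γ y - γ x)‖₊ := by congr 1; ring
        _ ≤ ‖γ x‖₊ + ‖γ y - γ x‖₊ := nnnorm_add_le _ _
    exact h2.trans (by gcongr)
  -- step 1
  have step1 : ∀ n : ℕ, ∀ x ∈ In n ∩ A,
      (∫⁻ y in In n, (‖γ y‖₊ : ℝ≥0∞) ^ p)
        ≤ (ENNReal.ofReal T * 2 ^ p) * ((‖γ x‖₊ : ℝ≥0∞) ^ p + (v n) ^ p) := by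
    intro n x hx
    have hpt : ∀ y ∈ In n, (‖γ y‖₊ : ℝ≥0∞) ^ p
        ≤ 2 ^ p * ((‖γ x‖₊ : ℝ≥0∞) ^ p + (v n) ^ p) := by
      intro y hy
      calc (‖γ y‖₊ : ℝ≥0∞) ^ p ≤ ((‖γ x‖₊ : ℝ≥0∞) + v n) ^ p :=
            ENNReal.rpow_le_rpow (hgy n x hx.1 y hy) hp0
        _ ≤ 2 ^ p * ((‖γ x‖₊ : ℝ≥0∞) ^ p + (v n) ^ p) := rpow_sum_le _ _ p hp0
    calc (∫⁻ y in In n, (‖γ y‖₊ : ℝ≥0∞) ^ p)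
        ≤ ∫⁻ _y in In n, 2 ^ p * ((‖γ x‖₊ : ℝ≥0∞) ^ p + (v n) ^ p) :=
          setLIntegral_mono' (hInMeas n) hpt
      _ = (2 ^ p * ((‖γ x‖₊ : ℝ≥0∞) ^ p + (v n) ^ p)) * volume (In n) := setLIntegral_const _ _
      _ = (ENNReal.ofReal T * 2 ^ p) * ((‖γ x‖₊ : ℝ≥0∞) ^ p + (v n) ^ p) := by
          rw [hvolIn n]; ring
  -- step 2
  have step2 : ∀ n : ℕ, ENNReal.ofReal ρ * (∫⁻ y in In n, (‖γ y‖₊ : ℝ≥0∞) ^ p)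
      ≤ (ENNReal.ofReal T * 2 ^ p) *
          ((∫⁻ x in In n ∩ A, (‖γ x‖₊ : ℝ≥0∞) ^ p) + (v n) ^ p * volume (In n ∩ A)) := by
    intro n
    calc ENNReal.ofReal ρ * (∫⁻ y in In n, (‖γ y‖₊ : ℝ≥0∞) ^ p)
        ≤ volume (In n ∩ A) * (∫⁻ y in In n, (‖γ y‖₊ : ℝ≥0∞) ^ p) := by
          gcongr
          exact hEn n
      _ = ∫⁻ _x in In n ∩ A, (∫⁻ y in In n, (‖γ y‖₊ : ℝ≥0∞) ^ p) := by
          rw [setLIntegral_const, mul_comm]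
      _ ≤ ∫⁻ x in In n ∩ A,
            ((ENNReal.ofReal T * 2 ^ p) * ((‖γ x‖₊ : ℝ≥0∞) ^ p + (v n) ^ p)) :=
          setLIntegral_mono' (hEnMeas n) (step1 n)
      _ = (ENNReal.ofReal T * 2 ^ p) *
            ∫⁻ x in In n ∩ A, ((‖γ x‖₊ : ℝ≥0∞) ^ p + (v n) ^ p) := by
          rw [lintegral_const_mul' _ _ (ENNReal.mul_ne_top hTtop h2ptop)]
      _ = (ENNReal.ofReal T * 2 ^ p) *
            ((∫⁻ x in In n ∩ A, (‖γ x‖₊ : ℝ≥0∞) ^ p) + (v n) ^ p * volume (In n ∩ A)) := by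
          rw [lintegral_add_right _ measurable_const, setLIntegral_const]
  -- step 3
  have step3 : ∀ n : ℕ, (∫⁻ x in In n ∩ A, (‖γ x‖₊ : ℝ≥0∞) ^ p)
      ≤ ((ENNReal.ofReal m)⁻¹) ^ p *
          ∫⁻ x in In n ∩ A,
            (‖(∑' k, c k * Complex.exp (-Complex.I * φ k * x)) * γ x‖₊ : ℝ≥0∞) ^ p := by
    intro n
    have hpt : ∀ x ∈ In n ∩ A, (‖γ x‖₊ : ℝ≥0∞) ^ p
        ≤ ((ENNReal.ofReal m)⁻¹) ^ p *
            (‖(∑' k, c k * Complex.exp (-Complex.I * φ k * x)) * γ x‖₊ : ℝ≥0∞) ^ p := by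
      intro x hx
      have hxA : m ≤ ‖∑' k, c k * Complex.exp (-Complex.I * φ k * x)‖ := by
        have := hx.2; rw [hAdef] at this; exact this
      have hkey : (‖γ x‖₊ : ℝ≥0∞)
          ≤ (ENNReal.ofReal m)⁻¹ *
            (‖(∑' k, c k * Complex.exp (-Complex.I * φ k * x)) * γ x‖₊ : ℝ≥0∞) := by
        have hnn : (‖(∑' k, c k * Complex.exp (-Complex.I * φ k * x)) * γ x‖₊ : ℝ≥0∞)
            = (‖∑' k, c k * Complex.exp (-Complex.I * φ k * x)‖₊ : ℝ≥0∞) * (‖γ x‖₊ : ℝ≥0∞) := by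
          rw [← ENNReal.coe_mul]
          congr 1
          rw [nnnorm_mul]
          congr 1
          exact Complex.nnnorm_real (γ x)
        rw [hnn]
        have h1 : ENNReal.ofReal m * (‖γ x‖₊ : ℝ≥0∞)
            ≤ (‖∑' k, c k * Complex.exp (-Complex.I * φ k * x)‖₊ : ℝ≥0∞) * (‖γ x‖₊ : ℝ≥0∞) := by
          gcongr
          rw [← enorm_eq_nnnorm, ← ofReal_norm]
          exact ENNReal.ofReal_le_ofReal hxA
        calc (‖γ x‖₊ : ℝ≥0∞)
            = (ENNReal.ofReal m)⁻¹ * (ENNReal.ofReal m * (‖γ x‖₊ : ℝ≥0∞)) := by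
              rw [← mul_assoc, ENNReal.inv_mul_cancel hm0 hmtop, one_mul]
          _ ≤ (ENNReal.ofReal m)⁻¹ *
              ((‖∑' k, c k * Complex.exp (-Complex.I * φ k * x)‖₊ : ℝ≥0∞) * (‖γ x‖₊ : ℝ≥0∞)) := by
              gcongr
      calc (‖γ x‖₊ : ℝ≥0∞) ^ p
          ≤ ((ENNReal.ofReal m)⁻¹ *
              (‖(∑' k, c k * Complex.exp (-Complex.I * φ k * x)) * γ x‖₊ : ℝ≥0∞)) ^ p :=
            ENNReal.rpow_le_rpow hkey hp0
        _ = _ := ENNReal.mul_rpow_of_nonneg _ _ hp0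
    calc (∫⁻ x in In n ∩ A, (‖γ x‖₊ : ℝ≥0∞) ^ p)
        ≤ ∫⁻ x in In n ∩ A, ((ENNReal.ofReal m)⁻¹) ^ p *
            (‖(∑' k, c k * Complex.exp (-Complex.I * φ k * x)) * γ x‖₊ : ℝ≥0∞) ^ p :=
          setLIntegral_mono' (hEnMeas n) hpt
      _ = _ := lintegral_const_mul' _ _ hminvptop
  -- combine per n
  obtain ⟨c1, hc1⟩ : ∃ c1 : ℝ≥0∞, c1 = (ENNReal.ofReal ρ)⁻¹ * (ENNReal.ofReal T * 2 ^ p) *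
      ((ENNReal.ofReal m)⁻¹) ^ p := ⟨_, rfl⟩
  obtain ⟨c2, hc2⟩ : ∃ c2 : ℝ≥0∞, c2 = (ENNReal.ofReal ρ)⁻¹ * (ENNReal.ofReal T * 2 ^ p) *
      ENNReal.ofReal T := ⟨_, rfl⟩
  have hc1top : c1 ≠ ⊤ := by
    rw [hc1]
    exact ENNReal.mul_ne_top (ENNReal.mul_ne_top (ENNReal.inv_ne_top.mpr hρ0)
      (ENNReal.mul_ne_top hTtop h2ptop)) hminvptop
  have hc2top : c2 ≠ ⊤ := by
    rw [hc2]
    exact ENNReal.mul_ne_top (ENNReal.mul_ne_top (ENNReal.inv_ne_top.mpr hρ0)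
      (ENNReal.mul_ne_top hTtop h2ptop)) hTtop
  have perN : ∀ n : ℕ, (∫⁻ y in In n, (‖γ y‖₊ : ℝ≥0∞) ^ p)
      ≤ c1 * (∫⁻ x in In n ∩ A,
          (‖(∑' k, c k * Complex.exp (-Complex.I * φ k * x)) * γ x‖₊ : ℝ≥0∞) ^ p)
        + c2 * (v n) ^ p := by
    intro n
    have hvolEn : volume (In n ∩ A) ≤ ENNReal.ofReal T := by
      rw [← hvolIn n]
      exact measure_mono inter_subset_left
    have h2 : ENNReal.ofReal ρ * (∫⁻ y in In n, (‖γ y‖₊ : ℝ≥0∞) ^ p)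
        ≤ (ENNReal.ofReal T * 2 ^ p) *
            (((ENNReal.ofReal m)⁻¹) ^ p *
              (∫⁻ x in In n ∩ A,
                (‖(∑' k, c k * Complex.exp (-Complex.I * φ k * x)) * γ x‖₊ : ℝ≥0∞) ^ p)
              + (v n) ^ p * ENNReal.ofReal T) := by
      refine (step2 n).trans ?_
      gcongr
      · exact step3 n
    calc (∫⁻ y in In n, (‖γ y‖₊ : ℝ≥0∞) ^ p)
        = (ENNReal.ofReal ρ)⁻¹ * (ENNReal.ofReal ρ * (∫⁻ y in In n, (‖γ y‖₊ : ℝ≥0∞) ^ p)) := by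
          rw [← mul_assoc, ENNReal.inv_mul_cancel hρ0 hρtop, one_mul]
      _ ≤ (ENNReal.ofReal ρ)⁻¹ * ((ENNReal.ofReal T * 2 ^ p) *
            (((ENNReal.ofReal m)⁻¹) ^ p *
              (∫⁻ x in In n ∩ A,
                (‖(∑' k, c k * Complex.exp (-Complex.I * φ k * x)) * γ x‖₊ : ℝ≥0∞) ^ p)
              + (v n) ^ p * ENNReal.ofReal T)) := by gcongr
      _ = _ := by rw [hc1, hc2]; ring
  -- disjointness / covering
  have hdisj : Pairwise (Function.onFun Disjoint fun n : ℕ => In n ∩ A) := by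
    intro i j hij
    have hd := Ioc_pairwise_disjoint T hT hij
    rw [← hIn] at hd
    exact hd.mono inter_subset_left inter_subset_left
  have hHsum : (∑' n : ℕ, ∫⁻ x in In n ∩ A,
        (‖(∑' k, c k * Complex.exp (-Complex.I * φ k * x)) * γ x‖₊ : ℝ≥0∞) ^ p)
      ≤ ∫⁻ x in Ioi (0:ℝ),
        (‖(∑' k, c k * Complex.exp (-Complex.I * φ k * x)) * γ x‖₊ : ℝ≥0∞) ^ p := by
    rw [← lintegral_iUnion hEnMeas hdisj]
    exact lintegral_mono' (Measure.restrict_mono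
      (iUnion_subset fun n => inter_subset_left.trans (hInSub n)) le_rfl) le_rfl
  have hvpsum : (∑' n : ℕ, (v n) ^ p)
      ≤ (eVariationOn γ (Ioi 0)) ^ (p - 1) * eVariationOn γ (Ioi 0) := by
    have hterm : ∀ n : ℕ, (v n) ^ p ≤ (eVariationOn γ (Ioi 0)) ^ (p - 1) * v n := by
      intro n
      by_cases hvn : v n = 0
      · rw [hvn, ENNReal.zero_rpow_of_pos (by linarith)]
        exact zero_le
      · have hvtop : v n ≠ ⊤ := ((hvV n).trans_lt (lt_top_iff_ne_top.mpr hVne)).ne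
        have : (v n) ^ p = (v n) ^ (p - 1) * (v n) ^ (1:ℝ) := by
          rw [← ENNReal.rpow_add _ _ hvn hvtop]
          norm_num
        rw [this, ENNReal.rpow_one]
        exact mul_le_mul_left (ENNReal.rpow_le_rpow (hvV n) (by linarith)) _
    calc (∑' n : ℕ, (v n) ^ p)
        ≤ ∑' n : ℕ, (eVariationOn γ (Ioi 0)) ^ (p - 1) * v n := ENNReal.tsum_le_tsum hterm
      _ = (eVariationOn γ (Ioi 0)) ^ (p - 1) * ∑' n : ℕ, v n := ENNReal.tsum_mul_left
      _ ≤ (eVariationOn γ (Ioi 0)) ^ (p - 1) * eVariationOn γ (Ioi 0) := by gcongr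
  have hVp1top : (eVariationOn γ (Ioi 0)) ^ (p - 1) ≠ ⊤ :=
    ENNReal.rpow_ne_top_of_nonneg (by linarith) hVne
  calc (∫⁻ x in Ioi (0:ℝ), (‖γ x‖₊ : ℝ≥0∞) ^ p)
      ≤ ∫⁻ x in ⋃ n : ℕ, In n, (‖γ x‖₊ : ℝ≥0∞) ^ p := by
        refine lintegral_mono' (Measure.restrict_mono ?_ le_rfl) le_rfl
        rw [hIn]
        exact cover_Ioi T hT
    _ ≤ ∑' n : ℕ, ∫⁻ y in In n, (‖γ y‖₊ : ℝ≥0∞) ^ p := lintegral_iUnion_le _ _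
    _ ≤ ∑' n : ℕ, (c1 * (∫⁻ x in In n ∩ A,
          (‖(∑' k, c k * Complex.exp (-Complex.I * φ k * x)) * γ x‖₊ : ℝ≥0∞) ^ p)
        + c2 * (v n) ^ p) := ENNReal.tsum_le_tsum perN
    _ = c1 * (∑' n : ℕ, ∫⁻ x in In n ∩ A,
          (‖(∑' k, c k * Complex.exp (-Complex.I * φ k * x)) * γ x‖₊ : ℝ≥0∞) ^ p)
        + c2 * ∑' n : ℕ, (v n) ^ p := by
        rw [ENNReal.tsum_add, ENNReal.tsum_mul_left, ENNReal.tsum_mul_left]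
    _ ≤ c1 * (∫⁻ x in Ioi (0:ℝ),
          (‖(∑' k, c k * Complex.exp (-Complex.I * φ k * x)) * γ x‖₊ : ℝ≥0∞) ^ p)
        + c2 * ((eVariationOn γ (Ioi 0)) ^ (p - 1) * eVariationOn γ (Ioi 0)) := by
        gcongr
    _ < ⊤ := by
        apply ENNReal.add_lt_top.mpr
        constructor
        · exact ENNReal.mul_lt_top (lt_top_iff_ne_top.mpr hc1top) hWγ
        · exact ENNReal.mul_lt_top (lt_top_iff_ne_top.mpr hc2top)
            (ENNReal.mul_lt_top (lt_top_iff_ne_top.mpr hVp1top) (lt_top_iff_ne_top.mpr hVne))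
end

section
/- Let p ≥ 2 be an integer and β ∈ (0, 1/(p−1)). Let (a_n)_{n≥1} be real numbers such that a_n − 1 = Σ_{l=1}^∞ c_l e^{−inφ_l} γ^{(l)}_n for every n, where (c_l) are complex numbers, (φ_l) are real numbers, and (γ^{(l)}_n) are complex sequences satisfying: sup_l Σ_{n=1}^∞ |γ^{(l)}_{n+1} − γ^{(l)}_n| < ∞; Σ_{n=1}^∞ ( sup_l |γ^{(l)}_n| )^p < ∞; and Σ_{l=1}^∞ |c_l|^β < ∞. Then there exist complex numbers (c'_m)_{m≥1}, real numbers (φ'_m)_{m≥1} and complex sequences (γ'^{(m)}_n) such that a_n² − 1 = Σ_{m=1}^∞ c'_m e^{−inφ'_m} γ'^{(m)}_n for every n, and such that sup_m Σ_{n=1}^∞ |γ'^{(m)}_{n+1} − γ'^{(m)}_n| < ∞, Σ_{n=1}^∞ ( sup_m |γ'^{(m)}_n| )^p < ∞, and Σ_{m=1}^∞ |c'_m|^β < ∞. -/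
open scoped BigOperators ENNReal
open MeasureTheory

private lemma hasSum_sumType {M : Type*} [AddCommMonoid M] [TopologicalSpace M]
    [ContinuousAdd M] {α β : Type*} {f : α ⊕ β → M} {x y : M}
    (h1 : HasSum (fun a => f (Sum.inl a)) x) (h2 : HasSum (fun b => f (Sum.inr b)) y) :
    HasSum f (x + y) := by
  have g1 : HasSum (Sum.elim (fun a => f (Sum.inl a)) (0 : β → M)) x := by
    refine (Function.Injective.hasSum_iff Sum.inl_injective ?_).1 h1
    rintro (z | z) hz
    · exact absurd ⟨z, rfl⟩ hz
    · rfl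
  have g2 : HasSum (Sum.elim (0 : α → M) (fun b => f (Sum.inr b))) y := by
    refine (Function.Injective.hasSum_iff Sum.inr_injective ?_).1 h2
    rintro (z | z) hz
    · rfl
    · exact absurd ⟨z, rfl⟩ hz
  have := g1.add g2
  convert this using 2 with i
  cases i <;> simp

private lemma summable_sumType {M : Type*} [AddCommMonoid M] [TopologicalSpace M]
    [ContinuousAdd M] {α β : Type*} {f : α ⊕ β → M}
    (h1 : Summable (fun a => f (Sum.inl a))) (h2 : Summable (fun b => f (Sum.inr b))) :
    Summable f :=
  ⟨_, hasSum_sumType h1.hasSum h2.hasSum⟩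

theorem stmt18 (p : ℕ) (hp : 2 ≤ p) (β : ℝ) (hβ0 : 0 < β) (hβ1 : β < 1 / ((p : ℝ) - 1))
    (a : ℕ → ℝ) (c : ℕ → ℂ) (φ : ℕ → ℝ) (γ : ℕ → ℕ → ℂ)
    (habs : ∀ n : ℕ, Summable fun l =>
      ‖c l * Complex.exp (-Complex.I * (n : ℝ) * φ l) * γ l n‖)
    (hrep : ∀ n : ℕ, ((a n - 1 : ℝ) : ℂ) =
      ∑' l, c l * Complex.exp (-Complex.I * (n : ℝ) * φ l) * γ l n)
    (hBV : ⨆ l, ∑' n : ℕ, (‖γ l (n + 1) - γ l n‖₊ : ℝ≥0∞) < ⊤)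
    (hlp : ∑' n : ℕ, (⨆ l, (‖γ l n‖₊ : ℝ≥0∞)) ^ p < ⊤)
    (hcβ : Summable fun l => ‖c l‖ ^ β) :
    ∃ (c' : ℕ → ℂ) (φ' : ℕ → ℝ) (γ' : ℕ → ℕ → ℂ),
      (∀ n : ℕ, Summable fun m =>
        ‖c' m * Complex.exp (-Complex.I * (n : ℝ) * φ' m) * γ' m n‖) ∧
      (∀ n : ℕ, ((a n ^ 2 - 1 : ℝ) : ℂ) =
        ∑' m, c' m * Complex.exp (-Complex.I * (n : ℝ) * φ' m) * γ' m n) ∧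
      (⨆ m, ∑' n : ℕ, (‖γ' m (n + 1) - γ' m n‖₊ : ℝ≥0∞) < ⊤) ∧
      (∑' n : ℕ, (⨆ m, (‖γ' m n‖₊ : ℝ≥0∞)) ^ p < ⊤) ∧
      Summable fun m => ‖c' m‖ ^ β := by
  classical
  set x : ℕ → ℕ → ℂ := fun n l => c l * Complex.exp (-Complex.I * (n : ℝ) * φ l) * γ l n with hx
  set e : ℕ ≃ (ℕ ⊕ ℕ × ℕ) := (Denumerable.eqv (ℕ ⊕ ℕ × ℕ)).symm with he
  set C : ℕ ⊕ ℕ × ℕ → ℂ := Sum.elim (fun l => 2 * c l) (fun q => c q.1 * c q.2) with hC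
  set Φ : ℕ ⊕ ℕ × ℕ → ℝ := Sum.elim φ (fun q => φ q.1 + φ q.2) with hΦ
  set Γ : ℕ ⊕ ℕ × ℕ → ℕ → ℂ := Sum.elim γ (fun q n => γ q.1 n * γ q.2 n) with hΓ
  -- the term function
  set F : ℕ → (ℕ ⊕ ℕ × ℕ) → ℂ :=
    fun n i => C i * Complex.exp (-Complex.I * (n : ℝ) * Φ i) * Γ i n with hF
  have hFinl : ∀ n l, F n (Sum.inl l) = 2 * x n l := by
    intro n l; simp only [hF, hC, hΦ, hΓ, hx, Sum.elim_inl]; ring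
  have hFinr : ∀ (n : ℕ) (q : ℕ × ℕ), F n (Sum.inr q) = x n q.1 * x n q.2 := by
    intro n q
    simp only [hF, hC, hΦ, hΓ, hx, Sum.elim_inr]
    have : Complex.exp (-Complex.I * (n : ℝ) * ((φ q.1 + φ q.2 : ℝ) : ℂ)) =
        Complex.exp (-Complex.I * (n : ℝ) * φ q.1) *
          Complex.exp (-Complex.I * (n : ℝ) * φ q.2) := by
      rw [← Complex.exp_add]
      push_cast
      ring_nf
    rw [this]; ring
  -- summability of norms over the sum type
  have habs' : ∀ n : ℕ, Summable fun i => ‖F n i‖ := by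
    intro n
    refine summable_sumType ?_ ?_
    · have := (habs n).mul_left 2
      refine this.congr fun l => ?_
      rw [hFinl, norm_mul]
      simp only [hx]
      norm_num
    · have := Summable.mul_norm (habs n) (habs n)
      refine this.congr fun q => ?_
      rw [hFinr]
  -- uniform bound on the γ's
  set s : ℕ → ℝ≥0∞ := fun n => ⨆ l, (‖γ l n‖₊ : ℝ≥0∞) with hs
  set M : ℝ≥0∞ := (∑' n, s n ^ p) ^ (1 / (p : ℝ)) with hM
  have hp0 : (p : ℝ) ≠ 0 := by
    have : 0 < p := lt_of_lt_of_le (by norm_num) hp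
    positivity
  have hMlt : M < ⊤ := ENNReal.rpow_lt_top_of_nonneg (by positivity) hlp.ne
  have hsM : ∀ n, s n ≤ M := by
    intro n
    have h1 : s n ^ p ≤ ∑' n, s n ^ p := ENNReal.le_tsum n
    calc s n = (s n ^ p) ^ (1 / (p : ℝ)) := by
          rw [← ENNReal.rpow_natCast (s n) p, ← ENNReal.rpow_mul,
            mul_one_div_cancel hp0, ENNReal.rpow_one]
      _ ≤ M := ENNReal.rpow_le_rpow h1 (by positivity)
  have hγM : ∀ l n, (‖γ l n‖₊ : ℝ≥0∞) ≤ M := fun l n =>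
    (le_iSup (fun l => (‖γ l n‖₊ : ℝ≥0∞)) l).trans (hsM n)
  refine ⟨fun m => C (e m), fun m => Φ (e m), fun m => Γ (e m), ?_, ?_, ?_, ?_, ?_⟩
  · -- absolute summability
    intro n
    exact (e.summable_iff (f := fun i => ‖F n i‖)).2 (habs' n)
  · -- representation
    intro n
    have hxsum : Summable (x n) := (habs n).of_norm
    have hA : HasSum (fun l => F n (Sum.inl l)) (2 * ((a n - 1 : ℝ) : ℂ)) := by
      have := (hxsum.hasSum.mul_left 2)
      rw [hrep n]
      exact this.congr_fun fun l => hFinl n l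
    have hprod : Summable fun q : ℕ × ℕ => x n q.1 * x n q.2 :=
      summable_mul_of_summable_norm (habs n) (habs n)
    have hB : HasSum (fun q => F n (Sum.inr q)) (((a n - 1 : ℝ) : ℂ) * ((a n - 1 : ℝ) : ℂ)) := by
      have h1 : ((a n - 1 : ℝ) : ℂ) * ((a n - 1 : ℝ) : ℂ) = ∑' q : ℕ × ℕ, x n q.1 * x n q.2 := by
        rw [hrep n]
        exact tsum_mul_tsum_of_summable_norm (habs n) (habs n)
      rw [h1]
      exact hprod.hasSum.congr_fun fun q => hFinr n q
    have hsum : HasSum (F n) (2 * ((a n - 1 : ℝ) : ℂ) + ((a n - 1 : ℝ) : ℂ) * ((a n - 1 : ℝ) : ℂ)) :=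
      hasSum_sumType hA hB
    calc ((a n ^ 2 - 1 : ℝ) : ℂ)
        = 2 * ((a n - 1 : ℝ) : ℂ) + ((a n - 1 : ℝ) : ℂ) * ((a n - 1 : ℝ) : ℂ) := by
          push_cast; ring
      _ = ∑' i, F n i := hsum.tsum_eq.symm
      _ = ∑' m, F n (e m) := (e.tsum_eq (F n)).symm
  · -- bounded variation
    set V : ℝ≥0∞ := ⨆ l, ∑' n : ℕ, (‖γ l (n + 1) - γ l n‖₊ : ℝ≥0∞) with hV
    have hVl : ∀ l, ∑' n : ℕ, (‖γ l (n + 1) - γ l n‖₊ : ℝ≥0∞) ≤ V := fun l =>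
      le_iSup (fun l => ∑' n : ℕ, (‖γ l (n + 1) - γ l n‖₊ : ℝ≥0∞)) l
    have key : ∀ i, ∑' n : ℕ, (‖Γ i (n + 1) - Γ i n‖₊ : ℝ≥0∞) ≤ (1 + 2 * M) * V := by
      rintro (l | ⟨l, l'⟩)
      · simp only [hΓ, Sum.elim_inl]
        calc ∑' n : ℕ, (‖γ l (n + 1) - γ l n‖₊ : ℝ≥0∞) ≤ V := hVl l
          _ = 1 * V := (one_mul V).symm
          _ ≤ (1 + 2 * M) * V := mul_le_mul_left (self_le_add_right 1 (2 * M)) V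
      · simp only [hΓ, Sum.elim_inr]
        have hpt : ∀ n : ℕ,
            (‖γ l (n + 1) * γ l' (n + 1) - γ l n * γ l' n‖₊ : ℝ≥0∞) ≤
              M * ‖γ l' (n + 1) - γ l' n‖₊ + M * ‖γ l (n + 1) - γ l n‖₊ := by
          intro n
          have hid : γ l (n + 1) * γ l' (n + 1) - γ l n * γ l' n =
              γ l (n + 1) * (γ l' (n + 1) - γ l' n) + (γ l (n + 1) - γ l n) * γ l' n := by ring
          rw [hid]
          calc (‖γ l (n + 1) * (γ l' (n + 1) - γ l' n) +
                (γ l (n + 1) - γ l n) * γ l' n‖₊ : ℝ≥0∞)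
              ≤ (‖γ l (n + 1) * (γ l' (n + 1) - γ l' n)‖₊ : ℝ≥0∞) +
                ‖(γ l (n + 1) - γ l n) * γ l' n‖₊ := by
                exact_mod_cast nnnorm_add_le _ _
            _ = (‖γ l (n + 1)‖₊ : ℝ≥0∞) * ‖γ l' (n + 1) - γ l' n‖₊ +
                (‖γ l (n + 1) - γ l n‖₊ : ℝ≥0∞) * ‖γ l' n‖₊ := by
                rw [nnnorm_mul, nnnorm_mul]; push_cast; ring
            _ ≤ M * ‖γ l' (n + 1) - γ l' n‖₊ + M * ‖γ l (n + 1) - γ l n‖₊ := by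
                refine add_le_add (mul_le_mul_left (hγM l (n + 1)) _) ?_
                rw [mul_comm]
                exact mul_le_mul_left (hγM l' n) _
        calc ∑' n : ℕ, (‖γ l (n + 1) * γ l' (n + 1) - γ l n * γ l' n‖₊ : ℝ≥0∞)
            ≤ ∑' n : ℕ, (M * ‖γ l' (n + 1) - γ l' n‖₊ + M * ‖γ l (n + 1) - γ l n‖₊) :=
              ENNReal.tsum_le_tsum hpt
          _ = M * (∑' n : ℕ, (‖γ l' (n + 1) - γ l' n‖₊ : ℝ≥0∞)) +
              M * (∑' n : ℕ, (‖γ l (n + 1) - γ l n‖₊ : ℝ≥0∞)) := by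
              rw [ENNReal.tsum_add, ENNReal.tsum_mul_left, ENNReal.tsum_mul_left]
          _ ≤ M * V + M * V := add_le_add (mul_le_mul_right (hVl l') M)
              (mul_le_mul_right (hVl l) M)
          _ ≤ (1 + 2 * M) * V := by
              have h : (1 + 2 * M) * V = V + (M * V + M * V) := by ring
              rw [h]; exact le_add_self
    refine lt_of_le_of_lt (iSup_le fun m => key (e m)) ?_
    exact ENNReal.mul_lt_top
      (ENNReal.add_lt_top.2 ⟨ENNReal.one_lt_top, ENNReal.mul_lt_top ENNReal.ofNat_lt_top hMlt⟩) hBV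
  · -- lp bound
    have hsup : ∀ n, (⨆ m, (‖Γ (e m) n‖₊ : ℝ≥0∞)) ≤ (1 + M) * s n := by
      intro n
      rw [show (⨆ m, (‖Γ (e m) n‖₊ : ℝ≥0∞)) = ⨆ i, (‖Γ i n‖₊ : ℝ≥0∞) from e.iSup_comp (g := fun i => (‖Γ i n‖₊ : ℝ≥0∞))]
      refine iSup_le ?_
      rintro (l | ⟨l, l'⟩)
      · simp only [hΓ, Sum.elim_inl]
        calc (‖γ l n‖₊ : ℝ≥0∞) ≤ s n := le_iSup (fun l => (‖γ l n‖₊ : ℝ≥0∞)) l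
          _ = 1 * s n := (one_mul _).symm
          _ ≤ (1 + M) * s n := mul_le_mul_left (self_le_add_right 1 M) _
      · simp only [hΓ, Sum.elim_inr]
        calc (‖γ l n * γ l' n‖₊ : ℝ≥0∞) = (‖γ l n‖₊ : ℝ≥0∞) * ‖γ l' n‖₊ := by
              rw [nnnorm_mul]; push_cast; ring
          _ ≤ M * s n := mul_le_mul' (hγM l n) (le_iSup (fun l => (‖γ l n‖₊ : ℝ≥0∞)) l')
          _ ≤ (1 + M) * s n := mul_le_mul_left (self_le_add_left M 1) _
    calc ∑' n : ℕ, (⨆ m, (‖Γ (e m) n‖₊ : ℝ≥0∞)) ^ p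
        ≤ ∑' n : ℕ, ((1 + M) * s n) ^ p :=
          ENNReal.tsum_le_tsum fun n => pow_le_pow_left' (hsup n) p
      _ = (1 + M) ^ p * ∑' n : ℕ, s n ^ p := by
          simp_rw [mul_pow]; rw [ENNReal.tsum_mul_left]
      _ < ⊤ := ENNReal.mul_lt_top
          (ENNReal.pow_lt_top (ENNReal.add_lt_top.2 ⟨ENNReal.one_lt_top, hMlt⟩)) hlp
  · -- summability of coefficients
    refine (e.summable_iff (f := fun i => ‖C i‖ ^ β)).2 (summable_sumType ?_ ?_)
    · have := hcβ.mul_left ((2 : ℝ) ^ β)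
      refine this.congr fun l => ?_
      simp only [hC, Sum.elim_inl, norm_mul]
      rw [Real.mul_rpow (by norm_num) (norm_nonneg _)]
      norm_num
    · have := Summable.mul_of_nonneg hcβ hcβ (fun l => Real.rpow_nonneg (norm_nonneg _) _)
        (fun l => Real.rpow_nonneg (norm_nonneg _) _)
      refine this.congr fun q => ?_
      simp only [hC, Sum.elim_inr, norm_mul]
      rw [Real.mul_rpow (norm_nonneg _) (norm_nonneg _)]
end

section
/- Let s, t ≥ 0 be integers, let (γ^{(l)}_n)_{n≥M} (for l ranging over some index set) be complex sequences with lim_{n→∞} γ^{(l)}_n = 0 for each l, and let τ ≥ 0 satisfy Σ_{n=M}^∞ |γ^{(l)}_{n+1} − γ^{(l)}_n| ≤ τ for every l. Let (φ_l) be real numbers indexed by the same set, let k be an integer, η ∈ ℝ, let (θ_n)_{n≥M} be real numbers, let k_1,…,k_s and l_1,…,l_t be indices, and set Γ_n = γ^{(k_1)}_n ⋯ γ^{(k_s)}_n · conj(γ^{(l_1)}_n) ⋯ conj(γ^{(l_t)}_n) and φ = φ_{k_1} + ⋯ + φ_{k_s} − φ_{l_1} − ⋯ − φ_{l_t}. Then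 for all integers N ≥ M, | Σ_{n=M}^{N} ( (e^{−i(kη−φ)} − 1) · e^{−inφ} Γ_n e^{ik((n+1)η + 2θ_n)} − e^{−inφ} Γ_n e^{ik((n+1)η + 2θ_n)} · ( e^{2ik(θ_{n+1} − θ_n)} − 1 ) ) | ≤ 2 τ^{s+t}. -/
open scoped BigOperators ENNReal NNReal
open MeasureTheory Filter

noncomputable def TT (g : ℕ → ℂ) (n : ℕ) : ℝ≥0∞ :=
  ∑' j : ℕ, (‖g (n + j + 1) - g (n + j)‖₊ : ℝ≥0∞)

lemma TT_congr {g h : ℕ → ℂ} (hgh : ∀ m, g m = h m) (n : ℕ) : TT g n = TT h n :=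
  tsum_congr fun j => by rw [hgh, hgh]

lemma pt_bound {g : ℕ → ℂ} (hg : Tendsto g atTop (nhds 0)) (n : ℕ) :
    (‖g n‖₊ : ℝ≥0∞) ≤ TT g n := by
  by_cases hfin : TT g n = ⊤
  · simp [hfin]
  set d : ℕ → ℂ := fun j => g (n + j + 1) - g (n + j) with hd
  have hnn : Summable fun j => ‖d j‖₊ := ENNReal.tsum_coe_ne_top_iff_summable.mp hfin
  have hnorm : Summable fun j => ‖d j‖ := by
    have := NNReal.summable_coe.mpr hnn
    simpa using this
  have hsd : Summable d := Summable.of_norm hnorm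
  have htel : ∀ K, ∑ j ∈ Finset.range K, d j = g (n + K) - g n := by
    intro K
    have h := Finset.sum_range_sub (fun j => g (n + j)) K
    rw [show g n = g (n + 0) from by norm_num, ← h]
    exact Finset.sum_congr rfl fun j _ => by
      simp only [hd]
      rw [show n + j + 1 = n + (j + 1) by omega]
  have hlim : Tendsto (fun K => g (n + K) - g n) atTop (nhds (0 - g n)) := by
    have h1 : Tendsto (fun K : ℕ => g (n + K)) atTop (nhds 0) := by
      have := hg.comp (tendsto_add_atTop_nat n)
      refine this.congr fun K => ?_
      simp [Function.comp, add_comm]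
    exact h1.sub tendsto_const_nhds
  have hteq : ∑' j, d j = -g n := by
    have h2 : Tendsto (fun K => ∑ j ∈ Finset.range K, d j) atTop (nhds (∑' j, d j)) :=
      hsd.hasSum.tendsto_sum_nat
    have h3 : Tendsto (fun K => ∑ j ∈ Finset.range K, d j) atTop (nhds (0 - g n)) := by
      refine hlim.congr fun K => (htel K).symm
    have h4 := tendsto_nhds_unique h2 h3
    simpa using h4
  have h5 : ‖g n‖ ≤ ∑' j, ‖d j‖ := by
    calc ‖g n‖ = ‖∑' j, d j‖ := by rw [hteq]; simp
    _ ≤ ∑' j, ‖d j‖ := norm_tsum_le_tsum_norm hnorm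
  calc (‖g n‖₊ : ℝ≥0∞) = ENNReal.ofReal ‖g n‖ := (ofReal_norm _).symm
  _ ≤ ENNReal.ofReal (∑' j, ‖d j‖) := ENNReal.ofReal_le_ofReal h5
  _ = ∑' j, ENNReal.ofReal ‖d j‖ := ENNReal.ofReal_tsum_of_nonneg (fun _ => norm_nonneg _) hnorm
  _ = TT g n := tsum_congr fun j => ofReal_norm _

lemma TT_mul {f g : ℕ → ℂ} (hf : Tendsto f atTop (nhds 0)) (hg : Tendsto g atTop (nhds 0))
    (n : ℕ) : TT (fun m => f m * g m) n ≤ TT f n * TT g n := by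
  set x : ℕ → ℝ≥0∞ := fun a => (‖f (n + a + 1) - f (n + a)‖₊ : ℝ≥0∞) with hx
  set y : ℕ → ℝ≥0∞ := fun b => (‖g (n + b + 1) - g (n + b)‖₊ : ℝ≥0∞) with hy
  have step1 : TT (fun m => f m * g m) n
      ≤ ∑' j : ℕ, ((‖f (n + j + 1)‖₊ : ℝ≥0∞) * y j + x j * (‖g (n + j)‖₊ : ℝ≥0∞)) := by
    refine ENNReal.tsum_le_tsum fun j => ?_
    have hsplit : f (n + j + 1) * g (n + j + 1) - f (n + j) * g (n + j)
        = f (n + j + 1) * (g (n + j + 1) - g (n + j))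
          + (f (n + j + 1) - f (n + j)) * g (n + j) := by ring
    calc (‖f (n + j + 1) * g (n + j + 1) - f (n + j) * g (n + j)‖₊ : ℝ≥0∞)
        = (‖f (n + j + 1) * (g (n + j + 1) - g (n + j))
            + (f (n + j + 1) - f (n + j)) * g (n + j)‖₊ : ℝ≥0∞) := by rw [hsplit]
      _ ≤ (‖f (n + j + 1) * (g (n + j + 1) - g (n + j))‖₊ : ℝ≥0∞)
            + (‖(f (n + j + 1) - f (n + j)) * g (n + j)‖₊ : ℝ≥0∞) := by
          exact_mod_cast nnnorm_add_le _ _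
      _ = (‖f (n + j + 1)‖₊ : ℝ≥0∞) * y j + x j * (‖g (n + j)‖₊ : ℝ≥0∞) := by
          rw [nnnorm_mul, nnnorm_mul]; push_cast; ring
  have hTf : ∀ j, (‖f (n + j + 1)‖₊ : ℝ≥0∞) ≤ ∑' i : ℕ, x (j + 1 + i) := by
    intro j
    refine (pt_bound hf (n + j + 1)).trans_eq ?_
    refine tsum_congr fun i => ?_
    simp only [hx]
    rw [show n + j + 1 + i + 1 = n + (j + 1 + i) + 1 by omega,
        show n + j + 1 + i = n + (j + 1 + i) by omega]
  have hTg : ∀ j, (‖g (n + j)‖₊ : ℝ≥0∞) ≤ ∑' i : ℕ, y (j + i) := by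
    intro j
    refine (pt_bound hg (n + j)).trans_eq ?_
    refine tsum_congr fun i => ?_
    simp only [hy]
    rw [show n + j + i + 1 = n + (j + i) + 1 by omega,
        show n + j + i = n + (j + i) by omega]
  have step2 : (∑' j : ℕ, (‖f (n + j + 1)‖₊ : ℝ≥0∞) * y j)
      ≤ ∑' j : ℕ, ∑' i : ℕ, x (j + 1 + i) * y j := by
    refine ENNReal.tsum_le_tsum fun j => ?_
    rw [ENNReal.tsum_mul_right]
    exact mul_le_mul_left (hTf j) _
  have step3 : (∑' j : ℕ, x j * (‖g (n + j)‖₊ : ℝ≥0∞))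
      ≤ ∑' j : ℕ, ∑' i : ℕ, x j * y (j + i) := by
    refine ENNReal.tsum_le_tsum fun j => ?_
    rw [ENNReal.tsum_mul_left]
    exact mul_le_mul_right (hTg j) _
  set G1 : ℕ × ℕ → ℝ≥0∞ := fun w => if w.2 < w.1 then x w.1 * y w.2 else 0 with hG1
  set G2 : ℕ × ℕ → ℝ≥0∞ := fun w => if w.1 ≤ w.2 then x w.1 * y w.2 else 0 with hG2
  have e1 : (∑' j : ℕ, ∑' i : ℕ, x (j + 1 + i) * y j) = ∑' w : ℕ × ℕ, G1 w := by
    rw [← ENNReal.tsum_prod]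
    have hinj : Function.Injective (fun p : ℕ × ℕ => ((p.1 + 1 + p.2, p.1) : ℕ × ℕ)) := by
      intro a b h
      simp only [Prod.mk.injEq] at h
      exact Prod.ext (by omega) (by omega)
    have hsupp : Function.support G1 ⊆ Set.range (fun p : ℕ × ℕ => ((p.1 + 1 + p.2, p.1) : ℕ × ℕ)) := by
      intro w hw
      have hlt : w.2 < w.1 := by
        by_contra hc
        exact hw (by simp [hG1, hc])
      exact ⟨(w.2, w.1 - w.2 - 1), Prod.ext (by simp; omega) (by simp)⟩
    have h := Function.Injective.tsum_eq hinj hsupp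
    rw [← h]
    refine tsum_congr fun p => ?_
    simp only [hG1]
    rw [if_pos (by omega : p.1 < p.1 + 1 + p.2)]
  have e2 : (∑' j : ℕ, ∑' i : ℕ, x j * y (j + i)) = ∑' w : ℕ × ℕ, G2 w := by
    rw [← ENNReal.tsum_prod]
    have hinj : Function.Injective (fun p : ℕ × ℕ => ((p.1, p.1 + p.2) : ℕ × ℕ)) := by
      intro a b h
      simp only [Prod.mk.injEq] at h
      exact Prod.ext (by omega) (by omega)
    have hsupp : Function.support G2 ⊆ Set.range (fun p : ℕ × ℕ => ((p.1, p.1 + p.2) : ℕ × ℕ)) := by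
      intro w hw
      have hle : w.1 ≤ w.2 := by
        by_contra hc
        exact hw (by simp [hG2, hc])
      exact ⟨(w.1, w.2 - w.1), Prod.ext (by simp) (by simp; omega)⟩
    have h := Function.Injective.tsum_eq hinj hsupp
    rw [← h]
    refine tsum_congr fun p => ?_
    simp only [hG2]
    rw [if_pos (by omega : p.1 ≤ p.1 + p.2)]
  have hcomb : (∑' w : ℕ × ℕ, G1 w) + (∑' w : ℕ × ℕ, G2 w) = TT f n * TT g n := by
    rw [← ENNReal.tsum_add]
    have : ∀ w : ℕ × ℕ, G1 w + G2 w = x w.1 * y w.2 := by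
      intro w
      by_cases h : w.2 < w.1
      · simp [hG1, hG2, h, not_le.mpr h]
      · simp [hG1, hG2, h, not_lt.mp h]
    rw [tsum_congr this, ENNReal.tsum_prod (f := fun a b => x a * y b)]
    calc (∑' a : ℕ, ∑' b : ℕ, x a * y b) = ∑' a : ℕ, x a * ∑' b : ℕ, y b :=
          tsum_congr fun a => ENNReal.tsum_mul_left
      _ = (∑' a : ℕ, x a) * ∑' b : ℕ, y b := ENNReal.tsum_mul_right
  calc TT (fun m => f m * g m) n
      ≤ ∑' j : ℕ, ((‖f (n + j + 1)‖₊ : ℝ≥0∞) * y j + x j * (‖g (n + j)‖₊ : ℝ≥0∞)) := step1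
    _ = (∑' j : ℕ, (‖f (n + j + 1)‖₊ : ℝ≥0∞) * y j)
        + ∑' j : ℕ, x j * (‖g (n + j)‖₊ : ℝ≥0∞) := ENNReal.tsum_add
    _ ≤ (∑' j : ℕ, ∑' i : ℕ, x (j + 1 + i) * y j)
        + ∑' j : ℕ, ∑' i : ℕ, x j * y (j + i) := add_le_add step2 step3
    _ = (∑' w : ℕ × ℕ, G1 w) + ∑' w : ℕ × ℕ, G2 w := by rw [e1, e2]
    _ = TT f n * TT g n := hcomb

lemma list_tendsto (L : List (ℕ → ℂ)) (h : ∀ f ∈ L, Tendsto f atTop (nhds 0)) (hne : L ≠ []) :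
    Tendsto (fun n => (L.map (fun f => f n)).prod) atTop (nhds 0) := by
  induction L with
  | nil => exact absurd rfl hne
  | cons f L ih =>
    have hf := h f List.mem_cons_self
    rcases eq_or_ne L [] with rfl | hL
    · simpa using hf
    · have h2 := ih (fun g hg => h g (List.mem_cons_of_mem f hg)) hL
      have h3 := hf.mul h2
      rw [zero_mul] at h3
      refine h3.congr fun m => ?_
      simp

lemma list_TT (L : List (ℕ → ℂ)) (h : ∀ f ∈ L, Tendsto f atTop (nhds 0)) (n : ℕ) :
    TT (fun m => (L.map (fun f => f m)).prod) n ≤ (L.map (fun f => TT f n)).prod := by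
  induction L with
  | nil =>
    simp only [List.map_nil, List.prod_nil]
    have h0 : TT (fun _ : ℕ => (1 : ℂ)) n = 0 := by simp [TT]
    exact le_of_eq (TT_congr (fun m => List.prod_nil) n) |>.trans (by rw [h0]; exact zero_le_one)
  | cons f L ih =>
    have hf := h f List.mem_cons_self
    have hrest : ∀ g ∈ L, Tendsto g atTop (nhds 0) := fun g hg => h g (List.mem_cons_of_mem f hg)
    simp only [List.map_cons, List.prod_cons]
    rcases eq_or_ne L [] with rfl | hL
    · simp only [List.map_nil, List.prod_nil, mul_one]
      exact le_of_eq (TT_congr (fun m => by simp) n)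
    · have hP := list_tendsto L hrest hL
      calc TT (fun m => f m * (L.map (fun g => g m)).prod) n
          ≤ TT f n * TT (fun m => (L.map (fun g => g m)).prod) n := TT_mul hf hP n
        _ ≤ TT f n * (L.map (fun g => TT g n)).prod := mul_le_mul_right (ih hrest) _

lemma tele (E : ℕ → ℂ) (M q : ℕ) :
    ∑ p ∈ Finset.range q, (E (M + p) - E (M + p + 1)) = E M - E (M + q) := by
  have h := Finset.sum_range_sub' (fun p => E (M + p)) q
  rw [show E M = E (M + 0) from by norm_num, ← h]
  exact Finset.sum_congr rfl fun p _ => by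
    rw [show M + p + 1 = M + (p + 1) by omega]

lemma keylem (M N : ℕ) (g E : ℕ → ℂ)
    (hg : Tendsto g atTop (nhds 0)) (hE : ∀ n, ‖E n‖ ≤ 1)
    (C : ℝ) (hC0 : 0 ≤ C) (hC : TT g M ≤ ENNReal.ofReal C) :
    ‖∑ n ∈ Finset.Icc M N, g n * (E n - E (n + 1))‖ ≤ 2 * C := by
  set d : ℕ → ℂ := fun m => g (M + m + 1) - g (M + m) with hd
  have hfin : (∑' j : ℕ, (‖d j‖₊ : ℝ≥0∞)) ≠ ⊤ := (lt_of_le_of_lt hC ENNReal.ofReal_lt_top).ne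
  have hnn : Summable fun j => ‖d j‖₊ := ENNReal.tsum_coe_ne_top_iff_summable.mp hfin
  have hnorm : Summable fun j => ‖d j‖ := by
    have := NNReal.summable_coe.mpr hnn
    simpa using this
  have hsumd : Summable d := Summable.of_norm hnorm
  have hCd : ∑' j, ‖d j‖ ≤ C := by
    set S : ℝ≥0 := ∑' j, ‖d j‖₊ with hS
    have h1 : (S : ℝ≥0∞) ≤ ENNReal.ofReal C := by
      rw [hS, ENNReal.coe_tsum hnn]; exact hC
    rw [ENNReal.ofReal] at h1
    have h2 := ENNReal.coe_le_coe.mp h1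
    have h3 : (S : ℝ) ≤ (C.toNNReal : ℝ) := by exact_mod_cast h2
    calc ∑' j, ‖d j‖ = (S : ℝ) := by
          rw [hS, NNReal.coe_tsum]
          exact tsum_congr fun j => (coe_nnnorm (d j)).symm
      _ ≤ (C.toNNReal : ℝ) := h3
      _ = C := Real.coe_toNNReal _ hC0
  have hrep : ∀ p : ℕ, g (M + p) = -∑' j, d (p + j) := by
    intro p
    have hs : Summable fun j => d (p + j) := by
      refine ((summable_nat_add_iff p).mpr hsumd).congr fun j => ?_
      rw [add_comm]
    have htel : ∀ K, ∑ j ∈ Finset.range K, d (p + j) = g (M + p + K) - g (M + p) := by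
      intro K
      have h := Finset.sum_range_sub (fun j => g (M + p + j)) K
      rw [show g (M + p) = g (M + p + 0) from by norm_num, ← h]
      exact Finset.sum_congr rfl fun j _ => by
        simp only [hd]
        rw [show M + (p + j) + 1 = M + p + (j + 1) by omega,
            show M + (p + j) = M + p + j by omega]
    have hlim : Tendsto (fun K => g (M + p + K) - g (M + p)) atTop (nhds (0 - g (M + p))) := by
      have h1 : Tendsto (fun K : ℕ => g (M + p + K)) atTop (nhds 0) := by
        have := hg.comp (tendsto_add_atTop_nat (M + p))
        refine this.congr fun K => ?_
        simp [Function.comp, add_comm]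
      exact h1.sub tendsto_const_nhds
    have h2 : Tendsto (fun K => ∑ j ∈ Finset.range K, d (p + j)) atTop (nhds (∑' j, d (p + j))) :=
      hs.hasSum.tendsto_sum_nat
    have h3 : Tendsto (fun K => ∑ j ∈ Finset.range K, d (p + j)) atTop (nhds (0 - g (M + p))) :=
      hlim.congr fun K => (htel K).symm
    have h4 := tendsto_nhds_unique h2 h3
    rw [h4]; ring
  set F : ℕ → ℕ → ℂ := fun p m => if p ≤ m then d m * (E (M + p) - E (M + p + 1)) else 0 with hF
  have hc2 : ∀ p, ‖E (M + p) - E (M + p + 1)‖ ≤ 2 := fun p =>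
    (norm_sub_le _ _).trans (by linarith [hE (M + p), hE (M + p + 1)])
  have hFsum : ∀ p, Summable (F p) := by
    intro p
    refine Summable.of_norm_bounded (hnorm.mul_right 2) fun m => ?_
    by_cases h : p ≤ m
    · simp only [hF, if_pos h, norm_mul]
      exact mul_le_mul_of_nonneg_left (hc2 p) (norm_nonneg _)
    · simp only [hF, if_neg h, norm_zero]
      positivity
  have key : ∀ K : ℕ, ∑ p ∈ Finset.range K, g (M + p) * (E (M + p) - E (M + p + 1))
      = -∑' m : ℕ, d m * (E M - E (M + min (m + 1) K)) := by
    intro K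
    have h1 : ∀ p ∈ Finset.range K,
        g (M + p) * (E (M + p) - E (M + p + 1)) = -∑' m, F p m := by
      intro p _
      rw [hrep p, neg_mul]
      congr 1
      rw [← tsum_mul_right]
      have hinj : Function.Injective (fun j : ℕ => p + j) := fun a b h =>
        Nat.add_left_cancel h
      have hsupp : Function.support (F p) ⊆ Set.range (fun j : ℕ => p + j) := by
        intro m hm
        rcases le_or_gt p m with h | h
        · exact ⟨m - p, by show p + (m - p) = m; omega⟩
        · exact absurd (by simp [hF, not_le.mpr h] : F p m = 0) hm
      have h := Function.Injective.tsum_eq hinj hsupp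
      rw [← h]
      exact tsum_congr fun j => by simp [hF, Nat.le_add_right]
    have hinner : ∀ m : ℕ, ∑ p ∈ Finset.range K, F p m
        = d m * (E M - E (M + min (m + 1) K)) := by
      intro m
      have h5 : ∑ p ∈ Finset.range K, F p m
          = ∑ p ∈ (Finset.range K).filter (fun p => p ≤ m), d m * (E (M + p) - E (M + p + 1)) :=
        (Finset.sum_filter _ _).symm
      have h6 : (Finset.range K).filter (fun p => p ≤ m) = Finset.range (min (m + 1) K) := by
        ext p
        simp only [Finset.mem_filter, Finset.mem_range, lt_min_iff]
        omega
      rw [h5, h6, ← Finset.mul_sum, tele E M (min (m + 1) K)]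
    calc ∑ p ∈ Finset.range K, g (M + p) * (E (M + p) - E (M + p + 1))
        = ∑ p ∈ Finset.range K, -∑' m, F p m := Finset.sum_congr rfl h1
      _ = -∑ p ∈ Finset.range K, ∑' m, F p m := by rw [Finset.sum_neg_distrib]
      _ = -∑' m, ∑ p ∈ Finset.range K, F p m := by
          rw [Summable.tsum_finsetSum (fun p _ => hFsum p)]
      _ = -∑' m, d m * (E M - E (M + min (m + 1) K)) := by rw [tsum_congr hinner]
  rw [← Finset.Ico_add_one_right_eq_Icc, Finset.sum_Ico_eq_sum_range,
      key, norm_neg]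
  have hb : ∀ m : ℕ, ‖d m * (E M - E (M + min (m + 1) (N + 1 - M)))‖ ≤ ‖d m‖ * 2 := by
    intro m
    rw [norm_mul]
    refine mul_le_mul_of_nonneg_left ?_ (norm_nonneg _)
    exact (norm_sub_le _ _).trans (by linarith [hE M, hE (M + min (m + 1) (N + 1 - M))])
  have hsum2 : Summable fun m => ‖d m * (E M - E (M + min (m + 1) (N + 1 - M)))‖ :=
    Summable.of_nonneg_of_le (fun m => norm_nonneg _) hb (hnorm.mul_right 2)
  calc ‖∑' m, d m * (E M - E (M + min (m + 1) (N + 1 - M)))‖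
      ≤ ∑' m, ‖d m * (E M - E (M + min (m + 1) (N + 1 - M)))‖ := norm_tsum_le_tsum_norm hsum2
    _ ≤ ∑' m, ‖d m‖ * 2 := Summable.tsum_le_tsum hb hsum2 (hnorm.mul_right 2)
    _ = (∑' m, ‖d m‖) * 2 := tsum_mul_right
    _ ≤ C * 2 := mul_le_mul_of_nonneg_right hCd (by norm_num)
    _ = 2 * C := by ring

set_option maxHeartbeats 1000000 in
theorem stmt19 {ι : Type*} (s t M : ℕ)
    (γ : ι → ℕ → ℂ)
    (hlim : ∀ l, Filter.Tendsto (γ l) Filter.atTop (nhds 0))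
    (τ : ℝ) (hτ : 0 ≤ τ)
    (hvar : ∀ l, ∑' n : ℕ, (‖γ l (M + n + 1) - γ l (M + n)‖₊ : ℝ≥0∞) ≤ ENNReal.ofReal τ)
    (φ : ι → ℝ) (k : ℤ) (η : ℝ) (θ : ℕ → ℝ)
    (ks : Fin s → ι) (ls : Fin t → ι) :
    ∀ N : ℕ, M ≤ N →
      ‖∑ n ∈ Finset.Icc M N,
          ((Complex.exp (-Complex.I *
                ((k : ℝ) * η - ((∑ i, φ (ks i)) - ∑ i, φ (ls i)) : ℝ)) - 1) *
              Complex.exp (-Complex.I * (n : ℝ) * ((∑ i, φ (ks i)) - ∑ i, φ (ls i) : ℝ)) *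
              ((∏ i, γ (ks i) n) * ∏ i, starRingEnd ℂ (γ (ls i) n)) *
              Complex.exp (Complex.I * (k : ℝ) * (((n : ℝ) + 1) * η + 2 * θ n))
            - Complex.exp (-Complex.I * (n : ℝ) * ((∑ i, φ (ks i)) - ∑ i, φ (ls i) : ℝ)) *
              ((∏ i, γ (ks i) n) * ∏ i, starRingEnd ℂ (γ (ls i) n)) *
              Complex.exp (Complex.I * (k : ℝ) * (((n : ℝ) + 1) * η + 2 * θ n)) *
              (Complex.exp (2 * Complex.I * (k : ℝ) * (θ (n + 1) - θ n)) - 1))‖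
        ≤ 2 * τ ^ (s + t) := by
  intro N hMN
  set φc : ℝ := (∑ i, φ (ks i)) - ∑ i, φ (ls i) with hφc
  set G : ℕ → ℂ := fun n => (∏ i, γ (ks i) n) * ∏ i, starRingEnd ℂ (γ (ls i) n) with hG
  set r : ℕ → ℝ := fun n => (1 - (n : ℝ)) * φc + (k : ℝ) * ((n : ℝ) * η + 2 * θ n) with hr
  set E : ℕ → ℂ := fun n => Complex.exp (Complex.I * (r n : ℂ)) with hE
  have hEnorm : ∀ n, ‖E n‖ ≤ 1 := by
    intro n
    simp only [hE]
    rw [Complex.norm_exp]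
    simp
  have hid : ∀ n : ℕ,
      (Complex.exp (-Complex.I * ((k : ℝ) * η - φc : ℝ)) - 1) *
          Complex.exp (-Complex.I * (n : ℝ) * (φc : ℝ)) * G n *
          Complex.exp (Complex.I * (k : ℝ) * (((n : ℝ) + 1) * η + 2 * θ n))
        - Complex.exp (-Complex.I * (n : ℝ) * (φc : ℝ)) * G n *
          Complex.exp (Complex.I * (k : ℝ) * (((n : ℝ) + 1) * η + 2 * θ n)) *
          (Complex.exp (2 * Complex.I * (k : ℝ) * (θ (n + 1) - θ n)) - 1)
        = G n * (E n - E (n + 1)) := by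
    intro n
    have e1 : E n = Complex.exp (-Complex.I * ((k : ℝ) * η - φc : ℝ)
        + (-Complex.I * (n : ℝ) * (φc : ℝ)
        + Complex.I * (k : ℝ) * (((n : ℝ) + 1) * η + 2 * θ n))) := by
      simp only [hE, hr]
      congr 1
      push_cast
      ring
    have e2 : E (n + 1) = Complex.exp (-Complex.I * (n : ℝ) * (φc : ℝ)
        + (Complex.I * (k : ℝ) * (((n : ℝ) + 1) * η + 2 * θ n)
        + 2 * Complex.I * (k : ℝ) * (θ (n + 1) - θ n))) := by
      simp only [hE, hr]
      congr 1
      push_cast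
      ring
    rw [e1, e2, Complex.exp_add, Complex.exp_add, Complex.exp_add, Complex.exp_add]
    ring
  rw [Finset.sum_congr rfl fun n _ => hid n]
  by_cases hst : s + t = 0
  · obtain ⟨hs, ht⟩ := Nat.add_eq_zero.mp hst
    subst hs ht
    have hG1 : ∀ n, G n = 1 := by intro n; simp [hG]
    rw [hst, pow_zero, mul_one]
    calc ‖∑ n ∈ Finset.Icc M N, G n * (E n - E (n + 1))‖
        = ‖∑ n ∈ Finset.Icc M N, (E n - E (n + 1))‖ := by
          congr 1
          exact Finset.sum_congr rfl fun n _ => by rw [hG1, one_mul]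
      _ = ‖E M - E (M + (N + 1 - M))‖ := by
          rw [← Finset.Ico_add_one_right_eq_Icc, Finset.sum_Ico_eq_sum_range,
            show N.succ - M = N + 1 - M from rfl, tele E M (N + 1 - M)]
      _ ≤ ‖E M‖ + ‖E (M + (N + 1 - M))‖ := norm_sub_le _ _
      _ ≤ 2 := by linarith [hEnorm M, hEnorm (M + (N + 1 - M))]
  · set L : List (ℕ → ℂ) := (List.ofFn fun i => γ (ks i))
      ++ (List.ofFn fun i => fun n => starRingEnd ℂ (γ (ls i) n)) with hL
    have hLmem : ∀ f ∈ L, Tendsto f atTop (nhds 0) ∧ TT f M ≤ ENNReal.ofReal τ := by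
      intro f hf
      rw [hL, List.mem_append] at hf
      rcases hf with hf | hf
      · obtain ⟨i, rfl⟩ := List.mem_ofFn.mp hf
        exact ⟨hlim _, hvar _⟩
      · obtain ⟨i, rfl⟩ := List.mem_ofFn.mp hf
        constructor
        · have h1 := (hlim (ls i)).star
          simpa using h1
        · have h2 : TT (fun n => starRingEnd ℂ (γ (ls i) n)) M = TT (γ (ls i)) M := by
            refine tsum_congr fun j => ?_
            rw [← map_sub, starRingEnd_apply, nnnorm_star]
          rw [h2]
          exact hvar _
    have hGlist : ∀ n, G n = (L.map (fun f => f n)).prod := by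
      intro n
      rw [hL, hG]
      simp [List.map_append, List.prod_append, List.map_ofFn, Function.comp, List.prod_ofFn]
    have hlen : L.length = s + t := by simp [hL]
    have hne : L ≠ [] := by
      intro h
      rw [h] at hlen
      simp at hlen
      omega
    have hGlim : Tendsto G atTop (nhds 0) := by
      have h := list_tendsto L (fun f hf => (hLmem f hf).1) hne
      exact h.congr fun n => (hGlist n).symm
    have hGvar : TT G M ≤ ENNReal.ofReal (τ ^ (s + t)) := by
      calc TT G M = TT (fun m => (L.map (fun f => f m)).prod) M := TT_congr hGlist M
        _ ≤ (L.map (fun f => TT f M)).prod := list_TT L (fun f hf => (hLmem f hf).1) M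
        _ ≤ ENNReal.ofReal τ ^ (L.map (fun f => TT f M)).length :=
            List.prod_le_pow_card _ _ (by
              intro x hx
              obtain ⟨f, hf, rfl⟩ := List.mem_map.mp hx
              exact (hLmem f hf).2)
        _ = ENNReal.ofReal (τ ^ (s + t)) := by
            rw [List.length_map, hlen, ENNReal.ofReal_pow hτ]
    exact keylem M N G E hGlim hEnorm _ (pow_nonneg hτ _) hGvar
end
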